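/- arXiv:1007.3967 — 6 statements merged into one kernel-verified Lean document; each statement's English description precedes it below -/
import Mathlib

section
/- Let U ⊆ ℝ² be open, n ≥ 1, and let f : U → ℝⁿ be a smooth conformal immersion with conformal factor u. With A_{ij} := ∂²_{ij} f − e^{−2u}(⟨∂²_{ij} f, ∂_1 f⟩ ∂_1 f + ⟨∂²_{ij} f, ∂_2 f⟩ ∂_2 f), one has at every point of U: ⟨A_{11}, A_{22}⟩ − |A_{12}|² = ⟨∂²_{11} f, ∂²_{22} f⟩ − |∂²_{12} f|² + 2 e^{2u} |Du|², where |Du|² = (∂_1 u)² + (∂_2 u)². -/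
open MeasureTheory Real Filter Topology

noncomputable section

/-- First partial derivative in the `i`-th coordinate direction. -/
def pd {E : Type*} [NormedAddCommGroup E] [NormedSpace ℝ E]
    (f : EuclideanSpace ℝ (Fin 2) → E) (i : Fin 2) (x : EuclideanSpace ℝ (Fin 2)) : E :=
  fderiv ℝ f x (EuclideanSpace.single i 1)

/-- Second partial derivative `∂_i ∂_j`. -/
def pd2 {E : Type*} [NormedAddCommGroup E] [NormedSpace ℝ E]
    (f : EuclideanSpace ℝ (Fin 2) → E) (i j : Fin 2) (x : EuclideanSpace ℝ (Fin 2)) : E :=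
  pd (pd f j) i x

/-- `f` is a smooth conformal immersion on `U` with conformal factor `u`,
i.e. `⟨∂_i f, ∂_j f⟩ = e^{2u} δ_{ij}` on `U`. -/
def IsConfImm {n : ℕ} (U : Set (EuclideanSpace ℝ (Fin 2)))
    (f : EuclideanSpace ℝ (Fin 2) → EuclideanSpace ℝ (Fin n))
    (u : EuclideanSpace ℝ (Fin 2) → ℝ) : Prop :=
  ContDiffOn ℝ (⊤ : ℕ∞) f U ∧ ContDiffOn ℝ (⊤ : ℕ∞) u U ∧
    ∀ x ∈ U, ∀ i j : Fin 2,
      (inner ℝ (pd f i x) (pd f j x) : ℝ) = Real.exp (2 * u x) * (if i = j then 1 else 0)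

/-- Second fundamental form `A_{ij}`: the normal component of the Hessian. -/
def sff {n : ℕ} (f : EuclideanSpace ℝ (Fin 2) → EuclideanSpace ℝ (Fin n))
    (u : EuclideanSpace ℝ (Fin 2) → ℝ) (i j : Fin 2) (x : EuclideanSpace ℝ (Fin 2)) :
    EuclideanSpace ℝ (Fin n) :=
  pd2 f i j x - Real.exp (-(2 * u x)) •
    ((inner ℝ (pd2 f i j x) (pd f 0 x) : ℝ) • pd f 0 x +
     (inner ℝ (pd2 f i j x) (pd f 1 x) : ℝ) • pd f 1 x)

/-- Purely algebraic core of the Gauß-type identity. -/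
lemma alg_core {n : ℕ} (t0 t1 h00 h01 h11 : EuclideanSpace ℝ (Fin n)) {e u0 u1 : ℝ}
    (he : e ≠ 0)
    (m00 : (inner ℝ t0 t0 : ℝ) = e) (m11 : (inner ℝ t1 t1 : ℝ) = e) (m01 : (inner ℝ t0 t1 : ℝ) = 0)
    (c1 : (inner ℝ h00 t0 : ℝ) = e * u0) (c2 : (inner ℝ h00 t1 : ℝ) = -(e * u1))
    (c3 : (inner ℝ h01 t0 : ℝ) = e * u1) (c4 : (inner ℝ h01 t1 : ℝ) = e * u0)
    (c5 : (inner ℝ h11 t0 : ℝ) = -(e * u0)) (c6 : (inner ℝ h11 t1 : ℝ) = e * u1) :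
    (inner ℝ (h00 - e⁻¹ • ((inner ℝ h00 t0 : ℝ) • t0 + (inner ℝ h00 t1 : ℝ) • t1))
           (h11 - e⁻¹ • ((inner ℝ h11 t0 : ℝ) • t0 + (inner ℝ h11 t1 : ℝ) • t1)) : ℝ)
      - ‖h01 - e⁻¹ • ((inner ℝ h01 t0 : ℝ) • t0 + (inner ℝ h01 t1 : ℝ) • t1)‖ ^ 2
    = (inner ℝ h00 h11 : ℝ) - ‖h01‖ ^ 2 + 2 * e * (u0 ^ 2 + u1 ^ 2) := by
  have c1' : (inner ℝ t0 h00 : ℝ) = e * u0 := by rw [real_inner_comm]; exact c1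
  have c2' : (inner ℝ t1 h00 : ℝ) = -(e * u1) := by rw [real_inner_comm]; exact c2
  have c3' : (inner ℝ t0 h01 : ℝ) = e * u1 := by rw [real_inner_comm]; exact c3
  have c4' : (inner ℝ t1 h01 : ℝ) = e * u0 := by rw [real_inner_comm]; exact c4
  have c5' : (inner ℝ t0 h11 : ℝ) = -(e * u0) := by rw [real_inner_comm]; exact c5
  have c6' : (inner ℝ t1 h11 : ℝ) = e * u1 := by rw [real_inner_comm]; exact c6
  have m01' : (inner ℝ t1 t0 : ℝ) = 0 := by rw [real_inner_comm]; exact m01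
  simp only [← real_inner_self_eq_norm_sq]
  simp only [inner_sub_left, inner_sub_right, inner_add_left, inner_add_right,
    real_inner_smul_left, real_inner_smul_right, c1, c2, c3, c4, c5, c6,
    c1', c2', c3', c4', c5', c6', m00, m11, m01, m01']
  field_simp
  ring

/-- Gauß-type identity:
`⟨A_{11}, A_{22}⟩ − |A_{12}|² = ⟨∂²_{11} f, ∂²_{22} f⟩ − |∂²_{12} f|² + 2 e^{2u} |Du|²`. -/
theorem stmt2 {n : ℕ} (hn : 1 ≤ n) (U : Set (EuclideanSpace ℝ (Fin 2))) (hU : IsOpen U)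
    (f : EuclideanSpace ℝ (Fin 2) → EuclideanSpace ℝ (Fin n))
    (u : EuclideanSpace ℝ (Fin 2) → ℝ) (hf : IsConfImm U f u) :
    ∀ x ∈ U,
      (inner ℝ (sff f u 0 0 x) (sff f u 1 1 x) : ℝ) - ‖sff f u 0 1 x‖ ^ 2 =
        (inner ℝ (pd2 f 0 0 x) (pd2 f 1 1 x) : ℝ) - ‖pd2 f 0 1 x‖ ^ 2
          + 2 * Real.exp (2 * u x) * ((pd u 0 x) ^ 2 + (pd u 1 x) ^ 2) := by
  obtain ⟨hf1, hf2, hf3⟩ := hf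
  intro x hx
  have hfx : ∀ y ∈ U, ContDiffAt ℝ (⊤ : ℕ∞) f y := fun y hy =>
    (hf1 y hy).contDiffAt (hU.mem_nhds hy)
  have hdf : ∀ (m : Fin 2) y, y ∈ U → DifferentiableAt ℝ (pd f m) y := by
    intro m y hy
    have h1 : ContDiffAt ℝ (⊤ : ℕ∞) (fderiv ℝ f) y :=
      (hfx y hy).fderiv_right (by exact_mod_cast le_top)
    exact (h1.clm_apply contDiffAt_const).differentiableAt (by simp)
  -- key derivative identity
  have key : ∀ k i j : Fin 2,
      (inner ℝ (pd f i x) (pd2 f k j x) : ℝ) + (inner ℝ (pd2 f k i x) (pd f j x) : ℝ)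
        = Real.exp (2 * u x) * (2 * pd u k x) * (if i = j then 1 else 0) := by
    intro k i j
    have heq : (fun y => (inner ℝ (pd f i y) (pd f j y) : ℝ)) =ᶠ[nhds x]
        (fun y => Real.exp (2 * u y) * (if i = j then 1 else 0)) := by
      filter_upwards [hU.mem_nhds hx] with y hy
      exact hf3 y hy i j
    have hd := heq.fderiv_eq (𝕜 := ℝ)
    have hL := fderiv_inner_apply (𝕜 := ℝ) (hdf i x hx) (hdf j x hx) (EuclideanSpace.single k 1)
    have hux : HasFDerivAt u (fderiv ℝ u x) x :=
      (((hf2 x hx).contDiffAt (hU.mem_nhds hx)).differentiableAt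
        (by simp)).hasFDerivAt
    have h2u : HasFDerivAt (fun y => 2 * u y) ((2:ℝ) • fderiv ℝ u x) x := hux.const_mul 2
    have hexp := (h2u.exp.mul_const (if i = j then (1:ℝ) else 0))
    have h1 : fderiv ℝ (fun y => (inner ℝ (pd f i y) (pd f j y) : ℝ)) x (EuclideanSpace.single k 1)
        = fderiv ℝ (fun y => Real.exp (2 * u y) * (if i = j then 1 else 0)) x
            (EuclideanSpace.single k 1) := by rw [hd]
    rw [hL, hexp.fderiv] at h1
    simp only [ContinuousLinearMap.smul_apply, smul_eq_mul] at h1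
    have e1 : fderiv ℝ (pd f j) x (EuclideanSpace.single k 1) = pd2 f k j x := rfl
    have e2 : fderiv ℝ (pd f i) x (EuclideanSpace.single k 1) = pd2 f k i x := rfl
    rw [e1, e2] at h1
    rw [h1]
    show _ = Real.exp (2 * u x) * (2 * fderiv ℝ u x (EuclideanSpace.single k 1)) * _
    ring
  -- symmetry of second derivatives
  have hsymm : pd2 f 0 1 x = pd2 f 1 0 x := by
    have hd2 : DifferentiableAt ℝ (fderiv ℝ f) x :=
      ((hfx x hx).fderiv_right (m := ((⊤:ℕ∞) : WithTop ℕ∞)) (by simp)).differentiableAt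
        (by simp)
    have hrepr : ∀ i j : Fin 2, pd2 f i j x
        = fderiv ℝ (fderiv ℝ f) x (EuclideanSpace.single i 1) (EuclideanSpace.single j 1) := by
      intro i j
      have h := fderiv_clm_apply (𝕜 := ℝ) (c := fderiv ℝ f)
        (u := fun _ => EuclideanSpace.single j 1) hd2 (differentiableAt_const _)
      have h2 : pd2 f i j x
          = fderiv ℝ (fun y => fderiv ℝ f y (EuclideanSpace.single j 1)) x
              (EuclideanSpace.single i 1) := rfl
      rw [h2, h]
      simp
    rw [hrepr, hrepr]
    exact ((hfx x hx).isSymmSndFDerivAt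
      (by rw [minSmoothness_of_isRCLikeNormedField]; exact_mod_cast ENat.natCast_le_of_coe_top_le_withTop le_rfl 2)) _ _
  have he : Real.exp (2 * u x) ≠ 0 := (Real.exp_pos _).ne'
  -- metric identities
  have m00 : (inner ℝ (pd f 0 x) (pd f 0 x) : ℝ) = Real.exp (2 * u x) := by
    have h := hf3 x hx 0 0; rw [if_pos rfl, mul_one] at h; exact h
  have m11 : (inner ℝ (pd f 1 x) (pd f 1 x) : ℝ) = Real.exp (2 * u x) := by
    have h := hf3 x hx 1 1; rw [if_pos rfl, mul_one] at h; exact h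
  have m01 : (inner ℝ (pd f 0 x) (pd f 1 x) : ℝ) = 0 := by
    have h := hf3 x hx 0 1; rw [if_neg (by decide), mul_zero] at h; exact h
  -- coefficients
  have K000 := key 0 0 0; rw [if_pos rfl] at K000
  have K011 := key 0 1 1; rw [if_pos rfl] at K011
  have K111 := key 1 1 1; rw [if_pos rfl] at K111
  have K100 := key 1 0 0; rw [if_pos rfl] at K100
  have K001 := key 0 0 1; rw [if_neg (by decide)] at K001
  have K101 := key 1 0 1; rw [if_neg (by decide)] at K101
  rw [← hsymm] at K100 K101
  have comm : ∀ a b : EuclideanSpace ℝ (Fin n), (inner ℝ a b : ℝ) = inner ℝ b a :=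
    fun a b => real_inner_comm b a
  have c1 : (inner ℝ (pd2 f 0 0 x) (pd f 0 x) : ℝ) = Real.exp (2 * u x) * pd u 0 x := by
    linear_combination K000 / 2 - comm (pd f 0 x) (pd2 f 0 0 x) / 2
  have c4 : (inner ℝ (pd2 f 0 1 x) (pd f 1 x) : ℝ) = Real.exp (2 * u x) * pd u 0 x := by
    linear_combination K011 / 2 - comm (pd f 1 x) (pd2 f 0 1 x) / 2
  have c6 : (inner ℝ (pd2 f 1 1 x) (pd f 1 x) : ℝ) = Real.exp (2 * u x) * pd u 1 x := by
    linear_combination K111 / 2 - comm (pd f 1 x) (pd2 f 1 1 x) / 2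
  have c3 : (inner ℝ (pd2 f 0 1 x) (pd f 0 x) : ℝ) = Real.exp (2 * u x) * pd u 1 x := by
    linear_combination K100 / 2 - comm (pd f 0 x) (pd2 f 0 1 x) / 2
  have c2 : (inner ℝ (pd2 f 0 0 x) (pd f 1 x) : ℝ) = -(Real.exp (2 * u x) * pd u 1 x) := by
    linear_combination K001 - comm (pd f 0 x) (pd2 f 0 1 x) - c3
  have c5 : (inner ℝ (pd2 f 1 1 x) (pd f 0 x) : ℝ) = -(Real.exp (2 * u x) * pd u 0 x) := by
    linear_combination K101 - comm (pd f 0 x) (pd2 f 1 1 x) - c4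
  -- conclude
  have hexpneg : Real.exp (-(2 * u x)) = (Real.exp (2 * u x))⁻¹ := Real.exp_neg _
  simp only [sff, hexpneg]
  exact alg_core (pd f 0 x) (pd f 1 x) (pd2 f 0 0 x) (pd2 f 0 1 x) (pd2 f 1 1 x)
    he m00 m11 m01 c1 c2 c3 c4 c5 c6
end
end

section
/- Let U ⊆ ℝ² be open, n ≥ 1, f : U → ℝⁿ smooth, u : U → ℝ smooth, and φ ∈ C_c^∞(U). Then ∫_U (⟨∂²_{11} f, ∂²_{22} f⟩ − |∂²_{12} f|²) e^{−2u} φ dx = ∫_U (⟨∂_1 f, ∂²_{12} f⟩ ∂_2(e^{−2u} φ) − ⟨∂_1 f, ∂²_{22} f⟩ ∂_1(e^{−2u} φ)) dx. -/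
open MeasureTheory Real Filter Topology
open scoped Manifold

noncomputable section

lemma one_le_top' : (1 : WithTop ℕ∞) ≤ ((⊤ : ℕ∞) : WithTop ℕ∞) := by norm_cast

lemma top_ne_zero' : ((⊤ : ℕ∞) : WithTop ℕ∞) ≠ 0 := by simp

section Aux

variable {F : Type*} [NormedAddCommGroup F] [NormedSpace ℝ F]

lemma contDiff_pd {g : EuclideanSpace ℝ (Fin 2) → F} (hg : ContDiff ℝ (⊤ : ℕ∞) g) (i : Fin 2) :
    ContDiff ℝ (⊤ : ℕ∞) (pd g i) := by
  have h1 : ContDiff ℝ (⊤ : ℕ∞) (fderiv ℝ g) := hg.fderiv_right (by simp)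
  exact h1.clm_apply contDiff_const

lemma pd_congr {f g : EuclideanSpace ℝ (Fin 2) → F} {x : EuclideanSpace ℝ (Fin 2)}
    (h : f =ᶠ[𝓝 x] g) (i : Fin 2) : pd f i x = pd g i x := by
  unfold pd; rw [h.fderiv_eq]

lemma pd2_symm {g : EuclideanSpace ℝ (Fin 2) → F} (hg : ContDiff ℝ (⊤ : ℕ∞) g)
    (i j : Fin 2) (x : EuclideanSpace ℝ (Fin 2)) : pd2 g i j x = pd2 g j i x := by
  have hsymm : IsSymmSndFDerivAt ℝ g x :=
    hg.contDiffAt.isSymmSndFDerivAt (by simp only [minSmoothness_of_isRCLikeNormedField]; norm_cast)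
  have hd : DifferentiableAt ℝ (fderiv ℝ g) x :=
    ((hg.fderiv_right (m := (⊤ : ℕ∞)) (by simp)).differentiable top_ne_zero') x
  have key : ∀ k l : Fin 2, pd2 g k l x
      = fderiv ℝ (fderiv ℝ g) x (EuclideanSpace.single k 1) (EuclideanSpace.single l 1) := by
    intro k l
    show fderiv ℝ (fun y => fderiv ℝ g y (EuclideanSpace.single l 1)) x
        (EuclideanSpace.single k 1) = _
    rw [fderiv_clm_apply hd (differentiableAt_const _)]
    simp
  rw [key, key]
  exact hsymm _ _

lemma integral_pd_eq_zero {h : EuclideanSpace ℝ (Fin 2) → ℝ} (hh : ContDiff ℝ (⊤ : ℕ∞) h)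
    (hc : HasCompactSupport h) (i : Fin 2) : ∫ x, pd h i x = 0 := by
  have hint : Integrable (fun x => fderiv ℝ h x (EuclideanSpace.single i 1)) volume :=
    (contDiff_pd hh i).continuous.integrable_of_hasCompactSupport (hc.fderiv_apply ℝ _)
  have := integral_mul_fderiv_eq_neg_fderiv_mul_of_integrable (μ := volume)
    (f := fun _ : EuclideanSpace ℝ (Fin 2) => (1 : ℝ)) (g := h)
    (v := EuclideanSpace.single i 1)
    (by simpa [fderiv_fun_const] using (integrable_zero _ ℝ (volume : Measure (EuclideanSpace ℝ (Fin 2)))))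
    (by simpa using hint)
    (by simpa using hh.continuous.integrable_of_hasCompactSupport hc)
    (fun x _ => differentiableAt_const _) (fun x _ => hh.differentiable top_ne_zero' x)
  simpa [fderiv_fun_const, pd] using this

end Aux

lemma keyA {n : ℕ} (g : EuclideanSpace ℝ (Fin 2) → EuclideanSpace ℝ (Fin n))
    (ψ : EuclideanSpace ℝ (Fin 2) → ℝ)
    (hg : ContDiff ℝ (⊤ : ℕ∞) g) (hψ : ContDiff ℝ (⊤ : ℕ∞) ψ) (hψc : HasCompactSupport ψ) :
    ∫ x, ((inner ℝ (pd2 g 0 0 x) (pd2 g 1 1 x) : ℝ) - ‖pd2 g 0 1 x‖ ^ 2) * ψ x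
      = ∫ x, ((inner ℝ (pd g 0 x) (pd2 g 0 1 x) : ℝ) * pd ψ 1 x
            - (inner ℝ (pd g 0 x) (pd2 g 1 1 x) : ℝ) * pd ψ 0 x) := by
  have hg0 : ContDiff ℝ (⊤ : ℕ∞) (pd g 0) := contDiff_pd hg 0
  have hg1 : ContDiff ℝ (⊤ : ℕ∞) (pd g 1) := contDiff_pd hg 1
  have hg01 : ContDiff ℝ (⊤ : ℕ∞) (pd2 g 0 1) := contDiff_pd hg1 0
  have hg11 : ContDiff ℝ (⊤ : ℕ∞) (pd2 g 1 1) := contDiff_pd hg1 1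
  set W : EuclideanSpace ℝ (Fin 2) → ℝ :=
    fun x => (inner ℝ (pd g 0 x) (pd2 g 0 1 x) : ℝ) * ψ x with hWdef
  set V : EuclideanSpace ℝ (Fin 2) → ℝ :=
    fun x => (inner ℝ (pd g 0 x) (pd2 g 1 1 x) : ℝ) * ψ x with hVdef
  have hW : ContDiff ℝ (⊤ : ℕ∞) W := (hg0.inner ℝ hg01).mul hψ
  have hV : ContDiff ℝ (⊤ : ℕ∞) V := (hg0.inner ℝ hg11).mul hψ
  have hWc : HasCompactSupport W :=
    hψc.mono' ((Function.support_mul_subset_right _ _).trans subset_closure)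
  have hVc : HasCompactSupport V :=
    hψc.mono' ((Function.support_mul_subset_right _ _).trans subset_closure)
  have hIW : ∫ x, pd W 1 x = 0 := integral_pd_eq_zero hW hWc 1
  have hIV : ∫ x, pd V 0 x = 0 := integral_pd_eq_zero hV hVc 0
  -- pointwise identity
  have hψd : Differentiable ℝ ψ := hψ.differentiable top_ne_zero'
  have key : ∀ x, ((inner ℝ (pd2 g 0 0 x) (pd2 g 1 1 x) : ℝ) - ‖pd2 g 0 1 x‖ ^ 2) * ψ x
      = pd V 0 x - pd W 1 x
        - ((inner ℝ (pd g 0 x) (pd2 g 1 1 x) : ℝ) * pd ψ 0 x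
          - (inner ℝ (pd g 0 x) (pd2 g 0 1 x) : ℝ) * pd ψ 1 x) := by
    intro x
    have hd0 : DifferentiableAt ℝ (pd g 0) x := (hg0.differentiable top_ne_zero') x
    have hd01 : DifferentiableAt ℝ (pd2 g 0 1) x := (hg01.differentiable top_ne_zero') x
    have hd11 : DifferentiableAt ℝ (pd2 g 1 1) x := (hg11.differentiable top_ne_zero') x
    have hV0 : pd V 0 x =
        ((inner ℝ (pd2 g 0 0 x) (pd2 g 1 1 x) : ℝ)
          + (inner ℝ (pd g 0 x) (pd (pd2 g 1 1) 0 x) : ℝ)) * ψ x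
        + (inner ℝ (pd g 0 x) (pd2 g 1 1 x) : ℝ) * pd ψ 0 x := by
      show fderiv ℝ (fun y => (inner ℝ (pd g 0 y) (pd2 g 1 1 y) : ℝ) * ψ y) x _ = _
      rw [fderiv_fun_mul (hd0.inner ℝ hd11) (hψd x)]
      rw [ContinuousLinearMap.add_apply, ContinuousLinearMap.smul_apply,
        ContinuousLinearMap.smul_apply, fderiv_inner_apply ℝ hd0 hd11]
      show _ * fderiv ℝ ψ x _ + ψ x * ((inner ℝ (pd g 0 x) (pd (pd2 g 1 1) 0 x) : ℝ)
          + (inner ℝ (pd2 g 0 0 x) (pd2 g 1 1 x) : ℝ)) = _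
      unfold pd
      ring
    have hW1 : pd W 1 x =
        ((inner ℝ (pd2 g 1 0 x) (pd2 g 0 1 x) : ℝ)
          + (inner ℝ (pd g 0 x) (pd (pd2 g 0 1) 1 x) : ℝ)) * ψ x
        + (inner ℝ (pd g 0 x) (pd2 g 0 1 x) : ℝ) * pd ψ 1 x := by
      show fderiv ℝ (fun y => (inner ℝ (pd g 0 y) (pd2 g 0 1 y) : ℝ) * ψ y) x _ = _
      rw [fderiv_fun_mul (hd0.inner ℝ hd01) (hψd x)]
      rw [ContinuousLinearMap.add_apply, ContinuousLinearMap.smul_apply,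
        ContinuousLinearMap.smul_apply, fderiv_inner_apply ℝ hd0 hd01]
      show _ * fderiv ℝ ψ x _ + ψ x * ((inner ℝ (pd g 0 x) (pd (pd2 g 0 1) 1 x) : ℝ)
          + (inner ℝ (pd2 g 1 0 x) (pd2 g 0 1 x) : ℝ)) = _
      unfold pd
      ring
    have hsym1 : pd2 g 1 0 x = pd2 g 0 1 x := pd2_symm hg 1 0 x
    have hsym2 : pd (pd2 g 1 1) 0 x = pd (pd2 g 0 1) 1 x := pd2_symm hg1 0 1 x
    have hnorm : (inner ℝ (pd2 g 0 1 x) (pd2 g 0 1 x) : ℝ) = ‖pd2 g 0 1 x‖ ^ 2 :=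
      real_inner_self_eq_norm_sq _
    rw [hV0, hW1, hsym1, hsym2, ← hnorm]
    ring
  have hintV : Integrable (fun x => pd V 0 x) volume :=
    (contDiff_pd hV 0).continuous.integrable_of_hasCompactSupport (hVc.fderiv_apply ℝ _)
  have hintW : Integrable (fun x => pd W 1 x) volume :=
    (contDiff_pd hW 1).continuous.integrable_of_hasCompactSupport (hWc.fderiv_apply ℝ _)
  have hψ0c : HasCompactSupport (fun x => pd ψ 0 x) := hψc.fderiv_apply ℝ _
  have hψ1c : HasCompactSupport (fun x => pd ψ 1 x) := hψc.fderiv_apply ℝ _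
  have hintJ : Integrable (fun x => (inner ℝ (pd g 0 x) (pd2 g 1 1 x) : ℝ) * pd ψ 0 x
      - (inner ℝ (pd g 0 x) (pd2 g 0 1 x) : ℝ) * pd ψ 1 x) volume := by
    apply Integrable.sub
    · refine Continuous.integrable_of_hasCompactSupport
        (((hg0.inner ℝ hg11).continuous.mul (contDiff_pd hψ 0).continuous)) ?_
      exact hψ0c.mono' ((Function.support_mul_subset_right _ _).trans subset_closure)
    · refine Continuous.integrable_of_hasCompactSupport
        (((hg0.inner ℝ hg01).continuous.mul (contDiff_pd hψ 1).continuous)) ?_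
      exact hψ1c.mono' ((Function.support_mul_subset_right _ _).trans subset_closure)
  calc ∫ x, ((inner ℝ (pd2 g 0 0 x) (pd2 g 1 1 x) : ℝ) - ‖pd2 g 0 1 x‖ ^ 2) * ψ x
      = ∫ x, (pd V 0 x - pd W 1 x
        - ((inner ℝ (pd g 0 x) (pd2 g 1 1 x) : ℝ) * pd ψ 0 x
          - (inner ℝ (pd g 0 x) (pd2 g 0 1 x) : ℝ) * pd ψ 1 x)) := by
        exact integral_congr_ae (Eventually.of_forall key)
    _ = (∫ x, pd V 0 x) - (∫ x, pd W 1 x)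
        - ∫ x, ((inner ℝ (pd g 0 x) (pd2 g 1 1 x) : ℝ) * pd ψ 0 x
          - (inner ℝ (pd g 0 x) (pd2 g 0 1 x) : ℝ) * pd ψ 1 x) := by
        have hVW : Integrable (fun x => pd V 0 x - pd W 1 x) volume := hintV.sub hintW
        rw [integral_sub hVW hintJ, integral_sub hintV hintW]
    _ = ∫ x, ((inner ℝ (pd g 0 x) (pd2 g 0 1 x) : ℝ) * pd ψ 1 x
            - (inner ℝ (pd g 0 x) (pd2 g 1 1 x) : ℝ) * pd ψ 0 x) := by
        rw [hIW, hIV]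
        have heq : ∫ x, ((inner ℝ (pd g 0 x) (pd2 g 0 1 x) : ℝ) * pd ψ 1 x
            - (inner ℝ (pd g 0 x) (pd2 g 1 1 x) : ℝ) * pd ψ 0 x)
            = - ∫ x, ((inner ℝ (pd g 0 x) (pd2 g 1 1 x) : ℝ) * pd ψ 0 x
            - (inner ℝ (pd g 0 x) (pd2 g 0 1 x) : ℝ) * pd ψ 1 x) := by
          rw [← integral_neg]
          exact integral_congr_ae (Eventually.of_forall fun x => by ring)
        rw [heq]
        ring

/-- Integration-by-parts identity for smooth `f`, `u` and `φ ∈ C_c^∞(U)`: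
`∫_U (⟨∂²_{11} f, ∂²_{22} f⟩ − |∂²_{12} f|²) e^{−2u} φ
  = ∫_U (⟨∂_1 f, ∂²_{12} f⟩ ∂_2(e^{−2u} φ) − ⟨∂_1 f, ∂²_{22} f⟩ ∂_1(e^{−2u} φ))`. -/
theorem stmt3 {n : ℕ} (hn : 1 ≤ n) (U : Set (EuclideanSpace ℝ (Fin 2))) (hU : IsOpen U)
    (f : EuclideanSpace ℝ (Fin 2) → EuclideanSpace ℝ (Fin n))
    (u φ : EuclideanSpace ℝ (Fin 2) → ℝ)
    (hf : ContDiffOn ℝ (⊤ : ℕ∞) f U) (hu : ContDiffOn ℝ (⊤ : ℕ∞) u U)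
    (hφ : ContDiff ℝ (⊤ : ℕ∞) φ) (hφc : HasCompactSupport φ) (hφU : tsupport φ ⊆ U) :
    ∫ x in U, ((inner ℝ (pd2 f 0 0 x) (pd2 f 1 1 x) : ℝ) - ‖pd2 f 0 1 x‖ ^ 2)
        * Real.exp (-(2 * u x)) * φ x
      = ∫ x in U,
          ((inner ℝ (pd f 0 x) (pd2 f 0 1 x) : ℝ)
              * pd (fun y => Real.exp (-(2 * u y)) * φ y) 1 x
            - (inner ℝ (pd f 0 x) (pd2 f 1 1 x) : ℝ)
              * pd (fun y => Real.exp (-(2 * u y)) * φ y) 0 x) := by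
  classical
  set ψ : EuclideanSpace ℝ (Fin 2) → ℝ := fun y => Real.exp (-(2 * u y)) * φ y with hψdef
  have hψ0 : ∀ x, x ∉ tsupport φ → ψ x = 0 := fun x hx => by
    simp [hψdef, image_eq_zero_of_notMem_tsupport hx]
  have hψsupp : tsupport ψ ⊆ tsupport φ := by
    apply closure_minimal _ (isClosed_closure)
    intro x hx
    by_contra hxn
    exact hx (hψ0 x hxn)
  have hψ : ContDiff ℝ (⊤ : ℕ∞) ψ := by
    rw [contDiff_iff_contDiffAt]
    intro x
    by_cases hx : x ∈ U
    · have hux : ContDiffAt ℝ (⊤ : ℕ∞) u x := hu.contDiffAt (hU.mem_nhds hx)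
      exact ((Real.contDiff_exp.contDiffAt.comp x
        ((contDiffAt_const.mul hux).neg)).mul hφ.contDiffAt)
    · have hxn : x ∉ tsupport φ := fun h => hx (hφU h)
      have hev : ψ =ᶠ[𝓝 x] (fun _ => 0) := by
        filter_upwards [(isOpen_compl_iff.mpr isClosed_closure).mem_nhds hxn] with y hy
        exact hψ0 y hy
      exact (contDiffAt_const (c := (0 : ℝ))).congr_of_eventuallyEq hev
  have hψc : HasCompactSupport ψ :=
    hφc.mono' ((Function.support_mul_subset_right _ _).trans subset_closure)
  -- cutoff function
  obtain ⟨K1, hK1c, hKK1, hK1U⟩ := exists_compact_between hφc hU hφU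
  obtain ⟨K2, hK2c, hK12, hK2U⟩ := exists_compact_between hK1c hU hK1U
  obtain ⟨χ₀, hχ0, hχ1, -⟩ :=
    exists_contMDiffMap_zero_one_of_isClosed (𝓘(ℝ, EuclideanSpace ℝ (Fin 2))) (n := (⊤ : ℕ∞))
      (isOpen_interior.isClosed_compl) hK1c.isClosed
      (Set.disjoint_left.mpr fun x hx h1x => hx (hK12 h1x))
  set χ : EuclideanSpace ℝ (Fin 2) → ℝ := ⇑χ₀ with hχdef
  have hχsm : ContDiff ℝ (⊤ : ℕ∞) χ := contMDiff_iff_contDiff.mp χ₀.contMDiff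
  have hχsupp : tsupport χ ⊆ K2 := by
    apply closure_minimal _ hK2c.isClosed
    intro x hx
    by_contra hxn
    have : x ∈ (interior K2)ᶜ := fun h => hxn (interior_subset h)
    exact hx (hχ0 this)
  set g : EuclideanSpace ℝ (Fin 2) → EuclideanSpace ℝ (Fin n) := fun x => χ x • f x with hgdef
  have hgsm : ContDiff ℝ (⊤ : ℕ∞) g := by
    rw [contDiff_iff_contDiffAt]
    intro x
    by_cases hx : x ∈ U
    · exact hχsm.contDiffAt.smul (hf.contDiffAt (hU.mem_nhds hx))
    · have hxn : x ∉ tsupport χ := fun h => hx (hK2U (hχsupp h))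
      have hev : g =ᶠ[𝓝 x] (fun _ => 0) := by
        filter_upwards [(isOpen_compl_iff.mpr isClosed_closure).mem_nhds hxn] with y hy
        simp [hgdef, image_eq_zero_of_notMem_tsupport hy]
      exact (contDiffAt_const (c := (0 : EuclideanSpace ℝ (Fin n)))).congr_of_eventuallyEq hev
  -- g agrees with f near interior K1
  have hgf : ∀ x ∈ interior K1, g =ᶠ[𝓝 x] f := by
    intro x hx
    filter_upwards [isOpen_interior.mem_nhds hx] with y hy
    simp [hgdef, hχ1 (interior_subset hy)]
  have hpd : ∀ i : Fin 2, ∀ x ∈ interior K1, pd g i x = pd f i x :=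
    fun i x hx => pd_congr (hgf x hx) i
  have hpd2 : ∀ i j : Fin 2, ∀ x ∈ interior K1, pd2 g i j x = pd2 f i j x := by
    intro i j x hx
    have hev : pd g j =ᶠ[𝓝 x] pd f j := by
      filter_upwards [isOpen_interior.mem_nhds hx] with y hy
      exact hpd j y hy
    exact pd_congr hev i
  -- rewrite LHS
  have hL : ∫ x in U, ((inner ℝ (pd2 f 0 0 x) (pd2 f 1 1 x) : ℝ) - ‖pd2 f 0 1 x‖ ^ 2)
        * Real.exp (-(2 * u x)) * φ x
      = ∫ x, ((inner ℝ (pd2 g 0 0 x) (pd2 g 1 1 x) : ℝ) - ‖pd2 g 0 1 x‖ ^ 2) * ψ x := by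
    have h1 : ∫ x in U, ((inner ℝ (pd2 f 0 0 x) (pd2 f 1 1 x) : ℝ) - ‖pd2 f 0 1 x‖ ^ 2)
          * Real.exp (-(2 * u x)) * φ x
        = ∫ x in U, ((inner ℝ (pd2 g 0 0 x) (pd2 g 1 1 x) : ℝ) - ‖pd2 g 0 1 x‖ ^ 2) * ψ x := by
      apply setIntegral_congr_fun hU.measurableSet
      intro x hx
      dsimp only
      by_cases hxφ : x ∈ tsupport φ
      · have hxi : x ∈ interior K1 := hKK1 hxφ
        rw [hpd2 0 0 x hxi, hpd2 1 1 x hxi, hpd2 0 1 x hxi, hψdef, mul_assoc]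
      · rw [hψ0 x hxφ, image_eq_zero_of_notMem_tsupport hxφ]; ring
    rw [h1]
    exact setIntegral_eq_integral_of_forall_compl_eq_zero
      (fun x hx => by rw [hψ0 x (fun h => hx (hφU h)), mul_zero])
  -- rewrite RHS
  have hpdψ0 : ∀ x, x ∉ tsupport φ → ∀ i : Fin 2, pd ψ i x = 0 := by
    intro x hx i
    have hxn : x ∉ tsupport ψ := fun h => hx (hψsupp h)
    simp only [pd, fderiv_of_notMem_tsupport ℝ hxn, ContinuousLinearMap.zero_apply]
  have hR : ∫ x in U,
          ((inner ℝ (pd f 0 x) (pd2 f 0 1 x) : ℝ) * pd ψ 1 x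
            - (inner ℝ (pd f 0 x) (pd2 f 1 1 x) : ℝ) * pd ψ 0 x)
      = ∫ x, ((inner ℝ (pd g 0 x) (pd2 g 0 1 x) : ℝ) * pd ψ 1 x
            - (inner ℝ (pd g 0 x) (pd2 g 1 1 x) : ℝ) * pd ψ 0 x) := by
    have h1 : ∫ x in U,
          ((inner ℝ (pd f 0 x) (pd2 f 0 1 x) : ℝ) * pd ψ 1 x
            - (inner ℝ (pd f 0 x) (pd2 f 1 1 x) : ℝ) * pd ψ 0 x)
        = ∫ x in U, ((inner ℝ (pd g 0 x) (pd2 g 0 1 x) : ℝ) * pd ψ 1 x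
            - (inner ℝ (pd g 0 x) (pd2 g 1 1 x) : ℝ) * pd ψ 0 x) := by
      apply setIntegral_congr_fun hU.measurableSet
      intro x hx
      dsimp only
      by_cases hxφ : x ∈ tsupport φ
      · have hxi : x ∈ interior K1 := hKK1 hxφ
        rw [hpd 0 x hxi, hpd2 0 1 x hxi, hpd2 1 1 x hxi]
      · rw [hpdψ0 x hxφ 0, hpdψ0 x hxφ 1]
        ring
    rw [h1]
    exact setIntegral_eq_integral_of_forall_compl_eq_zero
      (fun x hx => by
        rw [hpdψ0 x (fun h => hx (hφU h)) 0, hpdψ0 x (fun h => hx (hφU h)) 1]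
        ring)
  rw [hL, hR]
  exact keyA g ψ hgsm hψ hψc
end
end

section
/- Let U ⊆ ℂ be open and connected and let f : U → ℂ be a C² map (viewing ℂ ≅ ℝ²) which is harmonic, i.e. ∂²_{xx} f + ∂²_{yy} f = 0 on U, and conformal in the sense that |∂_x f(z)| = |∂_y f(z)| and Re(∂_x f(z) · conj(∂_y f(z))) = 0 for all z ∈ U. Then either f is holomorphic on U, or the conjugate map z ↦ conj(f(z)) is holomorphic on U. -/
open Complex Filter Topology

noncomputable section

/-- Partial derivative of `f : ℂ → ℂ` in the real coordinate direction. -/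
def pdx (f : ℂ → ℂ) (z : ℂ) : ℂ := fderiv ℝ f z 1

/-- Partial derivative of `f : ℂ → ℂ` in the imaginary coordinate direction. -/
def pdy (f : ℂ → ℂ) (z : ℂ) : ℂ := fderiv ℝ f z Complex.I

lemma holo_of_cr {f : ℂ → ℂ} {z : ℂ} (hd : DifferentiableAt ℝ f z)
    (hcr : fderiv ℝ f z I = I * fderiv ℝ f z 1) : DifferentiableAt ℂ f z := by
  set L := fderiv ℝ f z with hL
  refine HasFDerivAt.differentiableAt (f' := L 1 • ContinuousLinearMap.id ℂ ℂ)
    (hasFDerivAt_of_restrictScalars ℝ hd.hasFDerivAt ?_)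
  ext w
  have hw : w = w.re • (1 : ℂ) + w.im • I := by
    simp [Complex.real_smul]
  calc (L 1 • ContinuousLinearMap.id ℂ ℂ).restrictScalars ℝ w = L 1 * w := by
        simp [mul_comm]
    _ = L w := by
        conv_rhs => rw [hw]
        rw [map_add, map_smul, map_smul, hcr]
        simp only [Complex.real_smul, smul_eq_mul]
        nth_rewrite 1 [← Complex.re_add_im w]
        ring

lemma orth_cases {a b : ℂ} (h1 : ‖a‖ = ‖b‖)
    (h2 : (a * (starRingEnd ℂ) b).re = 0) : b = I * a ∨ b = -(I * a) := by
  have h1' : a.re * a.re + a.im * a.im = b.re * b.re + b.im * b.im := by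
    have h := congrArg (fun t => t * t) h1
    simpa [Complex.norm_mul_self_eq_normSq, Complex.normSq_apply] using h
  have h2' : a.re * b.re + a.im * b.im = 0 := by
    simpa [Complex.mul_re, Complex.conj_re, Complex.conj_im] using h2
  have key : ((b.re + a.im) ^ 2 + (b.im - a.re) ^ 2) *
      ((b.re - a.im) ^ 2 + (b.im + a.re) ^ 2) = 0 := by nlinarith [sq_nonneg (a.re*b.im - a.im*b.re)]
  rcases mul_eq_zero.mp key with h | h
  · left
    have h1 : b.re + a.im = 0 ∧ b.im - a.re = 0 := by
      constructor <;> nlinarith [sq_nonneg (b.re + a.im), sq_nonneg (b.im - a.re)]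
    apply Complex.ext <;> simp [Complex.mul_re, Complex.mul_im] <;> linarith [h1.1, h1.2]
  · right
    have h1 : b.re - a.im = 0 ∧ b.im + a.re = 0 := by
      constructor <;> nlinarith [sq_nonneg (b.re - a.im), sq_nonneg (b.im + a.re)]
    apply Complex.ext <;> simp [Complex.mul_re, Complex.mul_im] <;> linarith [h1.1, h1.2]

/-- A harmonic conformal `C²` map on a connected open set `U ⊆ ℂ` is holomorphic or
antiholomorphic. -/
theorem stmt6 (U : Set ℂ) (hU : IsOpen U) (hconn : IsConnected U)
    (f : ℂ → ℂ) (hf : ContDiffOn ℝ 2 f U)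
    (hharm : ∀ z ∈ U, pdx (pdx f) z + pdy (pdy f) z = 0)
    (hc1 : ∀ z ∈ U, ‖pdx f z‖ = ‖pdy f z‖)
    (hc2 : ∀ z ∈ U, (pdx f z * (starRingEnd ℂ) (pdy f z)).re = 0) :
    (∀ z ∈ U, DifferentiableAt ℂ f z) ∨
      (∀ z ∈ U, DifferentiableAt ℂ (fun w => (starRingEnd ℂ) (f w)) z) := by
  -- basic differentiability facts
  have hfd : ∀ z ∈ U, DifferentiableAt ℝ f z := fun z hz =>
    ((hf.differentiableOn (by norm_num)).differentiableAt (hU.mem_nhds hz))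
  have hC1 : ContDiffOn ℝ 1 (fderiv ℝ f) U := hf.fderiv_of_isOpen hU (by norm_num)
  have hF'd : ∀ z ∈ U, DifferentiableAt ℝ (fderiv ℝ f) z := fun z hz =>
    ((hC1.differentiableOn (by norm_num)).differentiableAt (hU.mem_nhds hz))
  -- second derivative notation
  set A : ℂ → ℂ →L[ℝ] ℂ →L[ℝ] ℂ := fun z => fderiv ℝ (fderiv ℝ f) z with hA
  -- derivatives of pdx f and pdy f
  have hpd : ∀ v : ℂ, ∀ z ∈ U, HasFDerivAt (fun w => fderiv ℝ f w v)
      ((ContinuousLinearMap.apply ℝ ℂ v).comp (A z)) z := by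
    intro v z hz
    exact (ContinuousLinearMap.apply ℝ ℂ v).hasFDerivAt.comp z (hF'd z hz).hasFDerivAt
  have hpdx : ∀ z ∈ U, HasFDerivAt (pdx f) ((ContinuousLinearMap.apply ℝ ℂ 1).comp (A z)) z :=
    fun z hz => hpd 1 z hz
  have hpdy : ∀ z ∈ U, HasFDerivAt (pdy f) ((ContinuousLinearMap.apply ℝ ℂ I).comp (A z)) z :=
    fun z hz => hpd I z hz
  -- symmetry of second derivative
  have hsymm : ∀ z ∈ U, A z 1 I = A z I 1 := by
    intro z hz
    refine second_derivative_symmetric_of_eventually (f := f) ?_ (hF'd z hz).hasFDerivAt 1 I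
    filter_upwards [hU.mem_nhds hz] with y hy
    exact (hfd y hy).hasFDerivAt
  -- harmonicity in terms of A
  have hharm2 : ∀ z ∈ U, A z 1 1 + A z I I = 0 := by
    intro z hz
    have e1 : pdx (pdx f) z = A z 1 1 := by
      show fderiv ℝ (pdx f) z 1 = A z 1 1
      rw [(hpdx z hz).fderiv]
      simp
    have e2 : pdy (pdy f) z = A z I I := by
      show fderiv ℝ (pdy f) z I = A z I I
      rw [(hpdy z hz).fderiv]
      simp
    rw [← e1, ← e2]
    exact hharm z hz
  -- the functions g (anti-CR defect) and h (CR defect)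
  set g : ℂ → ℂ := fun w => pdx f w + I * pdy f w with hg
  set h : ℂ → ℂ := fun w => pdx f w - I * pdy f w with hh
  have hgD : ∀ z ∈ U, HasFDerivAt g
      ((ContinuousLinearMap.apply ℝ ℂ 1).comp (A z) + I • (ContinuousLinearMap.apply ℝ ℂ I).comp (A z)) z :=
    fun z hz => (hpdx z hz).add ((hpdy z hz).const_mul I)
  have hhD : ∀ z ∈ U, HasFDerivAt h
      ((ContinuousLinearMap.apply ℝ ℂ 1).comp (A z) - I • (ContinuousLinearMap.apply ℝ ℂ I).comp (A z)) z :=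
    fun z hz => (hpdx z hz).sub ((hpdy z hz).const_mul I)
  -- h is holomorphic on U
  have hholo : ∀ z ∈ U, DifferentiableAt ℂ h z := by
    intro z hz
    refine holo_of_cr (hhD z hz).differentiableAt ?_
    rw [(hhD z hz).fderiv]
    simp only [ContinuousLinearMap.sub_apply, ContinuousLinearMap.smul_apply,
      ContinuousLinearMap.comp_apply, ContinuousLinearMap.apply_apply, smul_eq_mul]
    have m : A z I I = -(A z 1 1) := eq_neg_of_add_eq_zero_right (hharm2 z hz)
    rw [m, ← hsymm z hz]
    linear_combination (A z 1 I) * Complex.I_sq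
  -- conj ∘ g is holomorphic on U
  set G : ℂ → ℂ := fun w => (starRingEnd ℂ) (g w) with hGdef
  have hGD : ∀ z ∈ U, HasFDerivAt G
      ((Complex.conjCLE.toContinuousLinearMap).comp
        ((ContinuousLinearMap.apply ℝ ℂ 1).comp (A z) + I • (ContinuousLinearMap.apply ℝ ℂ I).comp (A z))) z := by
    intro z hz
    exact (Complex.conjCLE.toContinuousLinearMap.hasFDerivAt).comp z (hgD z hz)
  have hGholo : ∀ z ∈ U, DifferentiableAt ℂ G z := by
    intro z hz
    refine holo_of_cr (hGD z hz).differentiableAt ?_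
    rw [(hGD z hz).fderiv]
    simp only [ContinuousLinearMap.comp_apply, ContinuousLinearMap.add_apply,
      ContinuousLinearMap.smul_apply, ContinuousLinearMap.apply_apply, smul_eq_mul,
      ContinuousLinearEquiv.coe_coe, Complex.conjCLE_apply, map_add, map_mul, Complex.conj_I]
    have m : A z I I = -(A z 1 1) := eq_neg_of_add_eq_zero_right (hharm2 z hz)
    have m' := congrArg (starRingEnd ℂ) m
    have s' := congrArg (starRingEnd ℂ) (hsymm z hz)
    rw [map_neg] at m'
    rw [m', ← s']
    linear_combination ((starRingEnd ℂ) (A z 1 I)) * Complex.I_sq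
  -- pointwise alternative
  have halt : ∀ z ∈ U, g z = 0 ∨ h z = 0 := by
    intro z hz
    rcases orth_cases (hc1 z hz) (hc2 z hz) with hb | hb
    · left; rw [hg]; simp only; rw [hb]; linear_combination (pdx f z) * Complex.I_sq
    · right; rw [hh]; simp only; rw [hb]; linear_combination (pdx f z) * Complex.I_sq
  by_cases hcase : ∀ z ∈ U, g z = 0
  · left
    intro z hz
    refine holo_of_cr (hfd z hz) ?_
    have h0 := hcase z hz
    rw [hg] at h0; simp only at h0
    show pdy f z = I * pdx f z
    linear_combination (-I) * h0 + (pdy f z) * Complex.I_sq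
  · right
    push_neg at hcase
    obtain ⟨z₀, hz₀, hgz₀⟩ := hcase
    -- h vanishes near z₀, hence on all of U by the identity principle
    have hGz₀ : G z₀ ≠ 0 := by
      simp only [hGdef, ne_eq, map_eq_zero]
      exact hgz₀
    have hGcont : ContinuousAt G z₀ := (hGholo z₀ hz₀).continuousAt
    have hev : h =ᶠ[𝓝 z₀] 0 := by
      filter_upwards [hU.mem_nhds hz₀, hGcont.eventually_ne hGz₀] with y hyU hGy
      have hgy : g y ≠ 0 := by
        intro h0
        apply hGy
        simp [hGdef, h0]
      exact (halt y hyU).resolve_left hgy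
    have hdiffOn : DifferentiableOn ℂ h U := fun z hz => (hholo z hz).differentiableWithinAt
    have hanal : AnalyticOnNhd ℂ h U := hdiffOn.analyticOnNhd hU
    have hzero : Set.EqOn h 0 U :=
      hanal.eqOn_zero_of_preconnected_of_eventuallyEq_zero hconn.isPreconnected hz₀ hev
    intro z hz
    -- conj ∘ f satisfies CR
    have hdc : HasFDerivAt (fun w => (starRingEnd ℂ) (f w))
        ((Complex.conjCLE.toContinuousLinearMap).comp (fderiv ℝ f z)) z :=
      (Complex.conjCLE.toContinuousLinearMap.hasFDerivAt).comp z (hfd z hz).hasFDerivAt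
    refine holo_of_cr hdc.differentiableAt ?_
    rw [hdc.fderiv]
    simp only [ContinuousLinearMap.comp_apply, ContinuousLinearEquiv.coe_coe,
      Complex.conjCLE_apply]
    have h0 : pdx f z - I * pdy f z = 0 := hzero hz
    have h0' := congrArg (starRingEnd ℂ) h0
    simp only [map_sub, map_mul, Complex.conj_I, map_zero] at h0'
    show (starRingEnd ℂ) (pdy f z) = I * (starRingEnd ℂ) (pdx f z)
    linear_combination (-I) * h0' + ((starRingEnd ℂ) (pdy f z)) * Complex.I_sq
end
end

section
/- For every q ∈ [1,2) there is a constant C = C(q) < ∞ with the following property: for every integrable function F : ℝ² → ℝ, every p ∈ ℝ² and every r > 0, the Riesz-type potential w(x) := ∫_{ℝ²} |F(y)| / |x−y| dy satisfies ∫_{B_r(p)} w(x)^q dx ≤ C r^{2−q} (∫_{ℝ²} |F(y)| dy)^q. -/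
open MeasureTheory Real Metric
open scoped ENNReal NNReal

private lemma vol_ball_le (z : EuclideanSpace ℝ (Fin 2)) (s : ℝ) :
    volume (Metric.ball z s) ≤ ENNReal.ofReal (π * s ^ 2) := by
  rcases le_or_gt s 0 with hs | hs
  · rw [Metric.ball_eq_empty.mpr hs, measure_empty]; exact zero_le
  · rw [EuclideanSpace.volume_ball]
    have : (Fintype.card (Fin 2) : ℝ) = 2 := by simp
    rw [Fintype.card_fin]
    have h1 : Real.sqrt π ^ 2 / Real.Gamma ((2:ℕ) / 2 + 1) = π := by
      norm_num [Real.sq_sqrt pi_nonneg]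
    rw [h1, ← ENNReal.ofReal_pow hs.le, ← ENNReal.ofReal_mul (by positivity)]
    rw [mul_comm]
private lemma annulus_bound {q : ℝ} (hq0 : 0 < q) (y : EuclideanSpace ℝ (Fin 2))
    (A : Set (EuclideanSpace ℝ (Fin 2))) {d R : ℝ} (hd : 0 < d)
    (hAd : ∀ x ∈ A, d ≤ ‖x - y‖) (hAR : volume A ≤ ENNReal.ofReal (π * R ^ 2)) :
    ∫⁻ x in A, ENNReal.ofReal ‖x - y‖⁻¹ ^ q ≤ ENNReal.ofReal (π * R ^ 2 * d ^ (-q)) := by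
  have hb : ∀ x ∈ A, ENNReal.ofReal ‖x - y‖⁻¹ ^ q ≤ ENNReal.ofReal (d ^ (-q)) := by
    intro x hx
    have h1 : ‖x - y‖⁻¹ ≤ d⁻¹ := inv_anti₀ hd (hAd x hx)
    calc ENNReal.ofReal ‖x - y‖⁻¹ ^ q ≤ ENNReal.ofReal d⁻¹ ^ q :=
          ENNReal.rpow_le_rpow (ENNReal.ofReal_le_ofReal h1) hq0.le
      _ = ENNReal.ofReal (d ^ (-q)) := by
          rw [ENNReal.ofReal_rpow_of_pos (inv_pos.mpr hd), Real.inv_rpow hd.le,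
            ← Real.rpow_neg hd.le]
  calc ∫⁻ x in A, ENNReal.ofReal ‖x - y‖⁻¹ ^ q
      ≤ ∫⁻ _ in A, ENNReal.ofReal (d ^ (-q)) := setLIntegral_mono measurable_const hb
    _ = ENNReal.ofReal (d ^ (-q)) * volume A := setLIntegral_const A _
    _ ≤ ENNReal.ofReal (d ^ (-q)) * ENNReal.ofReal (π * R ^ 2) := mul_le_mul_right hAR _
    _ = ENNReal.ofReal (π * R ^ 2 * d ^ (-q)) := by
        rw [← ENNReal.ofReal_mul (by positivity), mul_comm]

private lemma term_eq {q r : ℝ} (hr : 0 < r) (n : ℕ) :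
    π * (r / 2 ^ (n+1)) ^ 2 * (r / 2 ^ (n+2)) ^ (-q) =
      ((2:ℝ) ^ (q - 2)) * (π * (r / 2 ^ n) ^ 2 * (r / 2 ^ (n+1)) ^ (-q)) := by
  have h2n : (0:ℝ) < 2 ^ n := by positivity
  have h2n1 : (0:ℝ) < 2 ^ (n+1) := by positivity
  have hd : ∀ x : ℝ, 0 < x → (x / 2) ^ (-q) = 2 ^ q * x ^ (-q) := by
    intro x hx
    rw [Real.div_rpow hx.le two_pos.le, Real.rpow_neg two_pos.le]
    field_simp
  have e1 : (r / 2 ^ (n+1)) ^ 2 = (r / 2 ^ n) ^ 2 / 4 := by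
    field_simp; ring
  have e2 : r / 2 ^ (n+2) = (r / 2 ^ (n+1)) / 2 := by
    rw [div_div, ← pow_succ]
  have e3 : (2:ℝ) ^ (q - 2) = 2 ^ q / 4 := by
    rw [Real.rpow_sub two_pos, Real.rpow_two]; norm_num
  rw [e1, e2, hd _ (by positivity), e3]
  ring

private lemma term_zero {q r : ℝ} (hr : 0 < r) :
    π * (r / 2 ^ 0) ^ 2 * (r / 2 ^ 1) ^ (-q) = π * 2 ^ q * r ^ (2 - q) := by
  have hd : (r / 2) ^ (-q) = 2 ^ q * r ^ (-q) := by
    rw [Real.div_rpow hr.le two_pos.le, Real.rpow_neg two_pos.le]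
    field_simp
  have e : r ^ (2 - q) = r ^ 2 * r ^ (-q) := by
    rw [show (2 - q : ℝ) = 2 + (-q) by ring, Real.rpow_add hr, Real.rpow_two]
  simp only [pow_zero, pow_one, div_one]
  rw [hd, e]; ring

private lemma term_formula {q r : ℝ} (hr : 0 < r) (n : ℕ) :
    π * (r / 2 ^ n) ^ 2 * (r / 2 ^ (n+1)) ^ (-q) =
      (π * 2 ^ q * r ^ (2 - q)) * ((2:ℝ) ^ (q - 2)) ^ n := by
  induction n with
  | zero => simpa using term_zero hr
  | succ n ih => rw [term_eq hr n, ih, pow_succ]; ring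

private lemma cover_lemma (p y : EuclideanSpace ℝ (Fin 2)) {r : ℝ} (hr : 0 < r) :
    Metric.ball p r ⊆ (Metric.ball p r \ Metric.ball y r) ∪
      ({y} ∪ ⋃ n : ℕ, (Metric.ball y (r / 2 ^ n) \ Metric.ball y (r / 2 ^ (n+1)))) := by
  classical
  intro x hx
  by_cases hxy : x ∈ Metric.ball y r
  · right
    by_cases hxeq : x = y
    · left; exact hxeq ▸ rfl
    · right
      set d := dist x y with hd
      have hd0 : 0 < d := dist_pos.mpr hxeq
      have hdr : d < r := Metric.mem_ball.mp hxy
      have hex : ∃ m : ℕ, r / 2 ^ (m+1) ≤ d := by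
        obtain ⟨m, hm⟩ := exists_pow_lt_of_lt_one (div_pos hd0 hr) (by norm_num : (1:ℝ)/2 < 1)
        refine ⟨m, ?_⟩
        have h1 : ((1:ℝ)/2) ^ (m+1) ≤ (1/2) ^ m :=
          pow_le_pow_of_le_one (by norm_num) (by norm_num) (Nat.le_succ m)
        have h2 : r * ((1:ℝ)/2) ^ m < r * (d / r) := by
          exact mul_lt_mul_of_pos_left hm hr
        rw [mul_div_cancel₀ _ hr.ne'] at h2
        calc r / 2 ^ (m+1) = r * ((1:ℝ)/2) ^ (m+1) := by rw [div_pow, one_pow]; ring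
          _ ≤ r * ((1:ℝ)/2) ^ m := by nlinarith
          _ ≤ d := h2.le
      refine Set.mem_iUnion.mpr ⟨Nat.find hex, Metric.mem_ball.mpr ?_,
        fun hmem => absurd (Metric.mem_ball.mp hmem) (not_lt.mpr (Nat.find_spec hex))⟩
      rcases Nat.eq_zero_or_pos (Nat.find hex) with h0 | h0
      · rw [h0]; simpa using hdr
      · obtain ⟨j, hj⟩ := Nat.exists_eq_succ_of_ne_zero h0.ne'
        have hmin := Nat.find_min hex (m := j) (by omega)
        push_neg at hmin
        rw [hj]
        exact hmin
  · left; exact ⟨hx, hxy⟩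

private lemma kernel_bound {q : ℝ} (hq : q ∈ Set.Ico (1:ℝ) 2) :
    ∃ cK : ℝ, 0 < cK ∧ ∀ (p y : EuclideanSpace ℝ (Fin 2)) {r : ℝ}, 0 < r →
      ∫⁻ x in Metric.ball p r, ENNReal.ofReal ‖x - y‖⁻¹ ^ q ≤
        ENNReal.ofReal (cK * r ^ (2 - q)) := by
  obtain ⟨hq1, hq2⟩ := hq
  have hq0 : (0:ℝ) < q := by linarith
  set a : ℝ := (2:ℝ) ^ (q - 2) with ha
  have ha0 : 0 < a := Real.rpow_pos_of_pos two_pos _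
  have ha1 : a < 1 := Real.rpow_lt_one_of_one_lt_of_neg one_lt_two (by linarith)
  have h1apos : (0:ℝ) < 1 - a := by linarith
  refine ⟨π + π * 2 ^ q * (1 - a)⁻¹, by positivity, ?_⟩
  intro p y r hr
  have houter : ∫⁻ x in Metric.ball p r \ Metric.ball y r, ENNReal.ofReal ‖x - y‖⁻¹ ^ q ≤
      ENNReal.ofReal (π * r ^ (2 - q)) := by
    have h := annulus_bound hq0 y (Metric.ball p r \ Metric.ball y r) hr
      (fun x hx => by
        have := hx.2
        rw [Metric.mem_ball, not_lt] at this
        rwa [← dist_eq_norm])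
      (le_trans (measure_mono Set.diff_subset) (vol_ball_le p r))
    refine le_trans h (le_of_eq ?_)
    congr 1
    have : r ^ 2 * r ^ (-q) = r ^ (2 - q) := by
      rw [show (2 - q : ℝ) = 2 + (-q) by ring, Real.rpow_add hr, Real.rpow_two]
    rw [mul_assoc, this]
  have hann : ∀ n : ℕ,
      ∫⁻ x in Metric.ball y (r / 2 ^ n) \ Metric.ball y (r / 2 ^ (n+1)),
        ENNReal.ofReal ‖x - y‖⁻¹ ^ q ≤
      ENNReal.ofReal (π * 2 ^ q * r ^ (2 - q)) * ENNReal.ofReal a ^ n := by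
    intro n
    have hd2 : (0:ℝ) < r / 2 ^ (n+1) := by positivity
    have h := annulus_bound hq0 y _ hd2
      (fun x hx => by
        have := hx.2
        rw [Metric.mem_ball, not_lt] at this
        rwa [← dist_eq_norm])
      (le_trans (measure_mono Set.diff_subset) (vol_ball_le y (r / 2 ^ n)))
    refine le_trans h (le_of_eq ?_)
    rw [term_formula hr n, ← ENNReal.ofReal_pow ha0.le, ← ENNReal.ofReal_mul (by positivity)]
  calc ∫⁻ x in Metric.ball p r, ENNReal.ofReal ‖x - y‖⁻¹ ^ q
      ≤ ∫⁻ x in (Metric.ball p r \ Metric.ball y r) ∪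
          ({y} ∪ ⋃ n : ℕ, (Metric.ball y (r / 2 ^ n) \ Metric.ball y (r / 2 ^ (n+1)))),
          ENNReal.ofReal ‖x - y‖⁻¹ ^ q := lintegral_mono_set (cover_lemma p y hr)
    _ ≤ ENNReal.ofReal (π * r ^ (2 - q)) +
          (0 + ENNReal.ofReal (π * 2 ^ q * r ^ (2 - q)) * (1 - ENNReal.ofReal a)⁻¹) := by
        refine le_trans (lintegral_union_le _ _ _) (add_le_add houter ?_)
        refine le_trans (lintegral_union_le _ _ _)
          (add_le_add (le_of_eq (setLIntegral_measure_zero _ _ (measure_singleton y))) ?_)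
        refine le_trans (lintegral_iUnion_le _ _) ?_
        calc ∑' n, ∫⁻ x in Metric.ball y (r / 2 ^ n) \ Metric.ball y (r / 2 ^ (n+1)),
              ENNReal.ofReal ‖x - y‖⁻¹ ^ q
            ≤ ∑' n, ENNReal.ofReal (π * 2 ^ q * r ^ (2 - q)) * ENNReal.ofReal a ^ n :=
              ENNReal.tsum_le_tsum hann
          _ = ENNReal.ofReal (π * 2 ^ q * r ^ (2 - q)) * (1 - ENNReal.ofReal a)⁻¹ := by
              rw [ENNReal.tsum_mul_left, ENNReal.tsum_geometric]
    _ = ENNReal.ofReal ((π + π * 2 ^ q * (1 - a)⁻¹) * r ^ (2 - q)) := by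
        rw [zero_add]
        have h1a : (1:ℝ≥0∞) - ENNReal.ofReal a = ENNReal.ofReal (1 - a) := by
          rw [ENNReal.ofReal_sub _ ha0.le, ENNReal.ofReal_one]
        rw [h1a, ← ENNReal.ofReal_inv_of_pos (by linarith), ← ENNReal.ofReal_mul (by positivity),
          ← ENNReal.ofReal_add (by positivity) (by positivity)]
        congr 1
        ring

private lemma jensen_aux {α : Type*} [MeasurableSpace α] (μ : Measure α) {q : ℝ} (hq1 : 1 ≤ q)
    {f g : α → ℝ≥0∞} (hf : Measurable f) (hg : Measurable g) :
    (∫⁻ a, f a * g a ∂μ) ^ q ≤ (∫⁻ a, f a ∂μ) ^ (q - 1) * ∫⁻ a, f a * g a ^ q ∂μ := by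
  rcases eq_or_lt_of_le hq1 with h | h
  · simp [← h]
  · have hq0 : (0:ℝ) < q := lt_trans one_pos h
    set p := Real.conjExponent q with hp
    have hpq : p.HolderConjugate q := (Real.HolderConjugate.conjExponent h).symm
    have hrpow : ∀ c : ℝ, Measurable fun x : ℝ≥0∞ => x ^ c :=
      fun c => ENNReal.continuous_rpow_const.measurable
    have key := ENNReal.lintegral_mul_le_Lp_mul_Lq μ hpq
      (f := fun a => f a ^ (1/p : ℝ)) (g := fun a => f a ^ (1/q : ℝ) * g a)
      ((hrpow _).comp hf).aemeasurable (((hrpow _).comp hf).mul hg).aemeasurable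
    have e1 : (fun a => (f a ^ (1/p : ℝ)) * (f a ^ (1/q : ℝ) * g a)) = fun a => f a * g a := by
      funext a
      rw [← mul_assoc, ← ENNReal.rpow_add_of_nonneg _ _ hpq.one_div_nonneg (by positivity),
        one_div, one_div, hpq.inv_add_inv_eq_one, ENNReal.rpow_one]
    have e2 : ∀ a, (f a ^ (1/p : ℝ)) ^ p = f a := by
      intro a
      rw [← ENNReal.rpow_mul, one_div, inv_mul_cancel₀ hpq.ne_zero, ENNReal.rpow_one]
    have e3 : ∀ a, (f a ^ (1/q : ℝ) * g a) ^ q = f a * g a ^ q := by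
      intro a
      rw [ENNReal.mul_rpow_of_nonneg _ _ hq0.le, ← ENNReal.rpow_mul, one_div,
        inv_mul_cancel₀ hq0.ne', ENNReal.rpow_one]
    simp only [Pi.mul_apply] at key
    rw [show (fun a => f a ^ (1/p:ℝ) * (f a ^ (1/q:ℝ) * g a)) = fun a => f a * g a from e1] at key
    simp only [e2, e3] at key
    have hq2 : ((1:ℝ)/p) * q = q - 1 := by
      rw [hp, Real.conjExponent]
      field_simp
    calc (∫⁻ a, f a * g a ∂μ) ^ q
        ≤ ((∫⁻ a, f a ∂μ) ^ (1/p:ℝ) * (∫⁻ a, f a * g a ^ q ∂μ) ^ (1/q:ℝ)) ^ q :=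
          ENNReal.rpow_le_rpow key hq0.le
      _ = (∫⁻ a, f a ∂μ) ^ (q - 1) * ∫⁻ a, f a * g a ^ q ∂μ := by
          rw [ENNReal.mul_rpow_of_nonneg _ _ hq0.le, ← ENNReal.rpow_mul, ← ENNReal.rpow_mul,
            hq2, one_div, inv_mul_cancel₀ hq0.ne', ENNReal.rpow_one]


/-- Riesz-potential estimate: for `q ∈ [1,2)` there is `C = C(q)` such that for integrable `F`,
`∫_{B_r(p)} (∫ |F(y)|/|x−y| dy)^q dx ≤ C r^{2−q} (∫ |F|)^q`. -/
theorem stmt12 (q : ℝ) (hq : q ∈ Set.Ico (1 : ℝ) 2) :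
    ∃ C : ℝ, 0 < C ∧
      ∀ F : EuclideanSpace ℝ (Fin 2) → ℝ, Integrable F →
        ∀ p : EuclideanSpace ℝ (Fin 2), ∀ r : ℝ, 0 < r →
          (∫⁻ x in Metric.ball p r,
              (∫⁻ y, ENNReal.ofReal (|F y| / ‖x - y‖)) ^ q)
            ≤ ENNReal.ofReal (C * r ^ (2 - q) * (∫ y, |F y|) ^ q) := by
  obtain ⟨cK, hcK, hker⟩ := kernel_bound hq
  obtain ⟨hq1, hq2⟩ := hq
  have hq0 : (0:ℝ) < q := by linarith
  refine ⟨cK, hcK, ?_⟩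
  intro F hF p r hr
  set G : EuclideanSpace ℝ (Fin 2) → ℝ := hF.1.mk F with hGdef
  have hGm : Measurable G := hF.1.stronglyMeasurable_mk.measurable
  have hFG : F =ᵐ[volume] G := hF.1.ae_eq_mk
  set f : EuclideanSpace ℝ (Fin 2) → ℝ≥0∞ := fun y => ENNReal.ofReal |G y| with hfdef
  have hfm : Measurable f := hGm.abs.ennreal_ofReal
  set I : ℝ≥0∞ := ∫⁻ y, f y with hIdef
  -- rewrite inner integral
  have step1 : ∀ x : EuclideanSpace ℝ (Fin 2),
      (∫⁻ y, ENNReal.ofReal (|F y| / ‖x - y‖)) =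
        ∫⁻ y, f y * ENNReal.ofReal ‖x - y‖⁻¹ := by
    intro x
    refine lintegral_congr_ae ?_
    filter_upwards [hFG] with y hy
    rw [hy, div_eq_mul_inv, ENNReal.ofReal_mul (abs_nonneg _)]
  -- measurability of the product kernel
  have hkerm : Measurable fun z : EuclideanSpace ℝ (Fin 2) × EuclideanSpace ℝ (Fin 2) =>
      f z.2 * ENNReal.ofReal ‖z.1 - z.2‖⁻¹ ^ q :=
    (hfm.comp measurable_snd).mul
      (ENNReal.continuous_rpow_const.measurable.comp
        (measurable_fst.sub measurable_snd).norm.inv.ennreal_ofReal)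
  have hTm : Measurable fun x => ∫⁻ y, f y * ENNReal.ofReal ‖x - y‖⁻¹ ^ q :=
    Measurable.lintegral_prod_right
      (f := fun x y => f y * ENNReal.ofReal ‖x - y‖⁻¹ ^ q) hkerm
  have hIabs : ENNReal.ofReal (∫ y, |F y|) = I := by
    rw [MeasureTheory.ofReal_integral_eq_lintegral_ofReal hF.abs
      (Filter.Eventually.of_forall fun y => abs_nonneg _)]
    exact lintegral_congr_ae (by filter_upwards [hFG] with y hy; rw [hy])
  calc ∫⁻ x in Metric.ball p r, (∫⁻ y, ENNReal.ofReal (|F y| / ‖x - y‖)) ^ q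
      = ∫⁻ x in Metric.ball p r, (∫⁻ y, f y * ENNReal.ofReal ‖x - y‖⁻¹) ^ q := by
        refine lintegral_congr fun x => ?_
        rw [step1 x]
    _ ≤ ∫⁻ x in Metric.ball p r,
          I ^ (q - 1) * ∫⁻ y, f y * ENNReal.ofReal ‖x - y‖⁻¹ ^ q := by
        refine lintegral_mono fun x => ?_
        exact jensen_aux volume hq1 hfm
          ((measurable_const.sub measurable_id).norm.inv.ennreal_ofReal)
    _ = I ^ (q - 1) * ∫⁻ x in Metric.ball p r,
          ∫⁻ y, f y * ENNReal.ofReal ‖x - y‖⁻¹ ^ q := lintegral_const_mul _ hTm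
    _ = I ^ (q - 1) * ∫⁻ y, ∫⁻ x in Metric.ball p r,
          f y * ENNReal.ofReal ‖x - y‖⁻¹ ^ q := by
        rw [lintegral_lintegral_swap hkerm.aemeasurable]
    _ ≤ I ^ (q - 1) * ∫⁻ y, f y * ENNReal.ofReal (cK * r ^ (2 - q)) := by
        refine mul_le_mul_right (lintegral_mono fun y => ?_) _
        have hky : Measurable fun x : EuclideanSpace ℝ (Fin 2) =>
            ENNReal.ofReal ‖x - y‖⁻¹ ^ q :=
          ENNReal.continuous_rpow_const.measurable.comp
            ((measurable_id.sub measurable_const).norm.inv.ennreal_ofReal)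
        rw [lintegral_const_mul _ hky]
        exact mul_le_mul_right (hker p y hr) _
    _ = I ^ (q - 1) * (I * ENNReal.ofReal (cK * r ^ (2 - q))) := by
        rw [lintegral_mul_const _ hfm]
    _ = I ^ q * ENNReal.ofReal (cK * r ^ (2 - q)) := by
        have hII : I ^ (q - 1) * I = I ^ q := by
          nth_rewrite 2 [← ENNReal.rpow_one I]
          rw [← ENNReal.rpow_add_of_nonneg _ _ (by linarith : (0:ℝ) ≤ q - 1) zero_le_one]
          norm_num
        rw [← mul_assoc, hII]
    _ = ENNReal.ofReal (cK * r ^ (2 - q) * (∫ y, |F y|) ^ q) := by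
        rw [← hIabs, ENNReal.ofReal_rpow_of_nonneg (integral_nonneg fun y => abs_nonneg _)
          hq0.le, ← ENNReal.ofReal_mul
          (Real.rpow_nonneg (integral_nonneg fun y => abs_nonneg _) q)]
        congr 1
        ring
end

section
/- For ε > 0 let f_ε : ℂ → ℂ² ≅ ℝ⁴, f_ε(z) = (½ z², ε z), which is a smooth conformal immersion with conformal factor u_ε(z) = ½ log(|z|² + ε²). Then its second fundamental form satisfies ∫_D |A|²_{g_ε} dμ_{g_ε} = 4π/(1 + ε²); in particular this quantity is strictly less than 4π for every ε > 0. -/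
open MeasureTheory Real Filter Topology

noncomputable section

/-- `|A|²_g = e^{-4u} Σ_{i,j} |A_{ij}|²`. -/
def normASq {n : ℕ} (f : EuclideanSpace ℝ (Fin 2) → EuclideanSpace ℝ (Fin n))
    (u : EuclideanSpace ℝ (Fin 2) → ℝ) (x : EuclideanSpace ℝ (Fin 2)) : ℝ :=
  Real.exp (-(4 * u x)) * ∑ i : Fin 2, ∑ j : Fin 2, ‖sff f u i j x‖ ^ 2

/-- The map `f_ε(z) = (½ z², ε z) : ℂ → ℂ² ≅ ℝ⁴`, written in real coordinates
`z = x₀ + i x₁`. -/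
def fEps (ε : ℝ) (x : EuclideanSpace ℝ (Fin 2)) : EuclideanSpace ℝ (Fin 4) :=
  (WithLp.equiv 2 (Fin 4 → ℝ)).symm ![(x 0 ^ 2 - x 1 ^ 2) / 2, x 0 * x 1, ε * x 0, ε * x 1]

/-- The conformal factor `u_ε(z) = ½ log(|z|² + ε²)` of `f_ε`. -/
def uEps (ε : ℝ) (x : EuclideanSpace ℝ (Fin 2)) : ℝ :=
  (1 / 2) * Real.log (x 0 ^ 2 + x 1 ^ 2 + ε ^ 2)

abbrev E2 := EuclideanSpace ℝ (Fin 2)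
abbrev E4 := EuclideanSpace ℝ (Fin 4)

def v4 (a b c d : ℝ) : E4 := (WithLp.equiv 2 (Fin 4 → ℝ)).symm ![a,b,c,d]

lemma v4_apply (a b c d : ℝ) (k : Fin 4) : v4 a b c d k = ![a,b,c,d] k := rfl

def Lmk (d0 d1 d2 d3 : E2 →L[ℝ] ℝ) : E2 →L[ℝ] E4 :=
  ((PiLp.continuousLinearEquiv 2 ℝ (fun _ : Fin 4 => ℝ)).symm :
      (Fin 4 → ℝ) →L[ℝ] E4).comp (ContinuousLinearMap.pi ![d0,d1,d2,d3])

lemma Lmk_apply (d0 d1 d2 d3 : E2 →L[ℝ] ℝ) (v : E2) :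
    Lmk d0 d1 d2 d3 v = v4 (d0 v) (d1 v) (d2 v) (d3 v) := by
  ext k
  fin_cases k <;> rfl

lemma hasFDerivAt_v4 {g0 g1 g2 g3 : E2 → ℝ} {d0 d1 d2 d3 : E2 →L[ℝ] ℝ} {x : E2}
    (h0 : HasFDerivAt g0 d0 x) (h1 : HasFDerivAt g1 d1 x)
    (h2 : HasFDerivAt g2 d2 x) (h3 : HasFDerivAt g3 d3 x) :
    HasFDerivAt (fun x => v4 (g0 x) (g1 x) (g2 x) (g3 x)) (Lmk d0 d1 d2 d3) x := by
  have hg : HasFDerivAt (fun x => ![g0 x, g1 x, g2 x, g3 x])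
      (ContinuousLinearMap.pi ![d0,d1,d2,d3]) x := by
    apply hasFDerivAt_pi''
    intro k
    fin_cases k <;> simpa [ContinuousLinearMap.proj_pi]
  exact (((PiLp.continuousLinearEquiv 2 ℝ (fun _ : Fin 4 => ℝ)).symm :
      (Fin 4 → ℝ) →L[ℝ] E4).hasFDerivAt).comp x hg

def Dc (a b : ℝ) : E2 →L[ℝ] ℝ :=
  a • EuclideanSpace.proj (0 : Fin 2) + b • EuclideanSpace.proj (1 : Fin 2)

lemma Dc_apply (a b : ℝ) (v : E2) : Dc a b v = a * v 0 + b * v 1 := rfl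

lemma Dc_single0 (a b : ℝ) : Dc a b (EuclideanSpace.single (0 : Fin 2) 1) = a := by
  simp [Dc_apply, EuclideanSpace.single_apply]

lemma Dc_single1 (a b : ℝ) : Dc a b (EuclideanSpace.single (1 : Fin 2) 1) = b := by
  simp [Dc_apply, EuclideanSpace.single_apply]

lemma hx0 (x : E2) : HasFDerivAt (fun y : E2 => y 0) (Dc 1 0) x := by
  have h : Dc 1 0 = EuclideanSpace.proj (0 : Fin 2) := by ext v; simp [Dc_apply]
  rw [h]
  exact ContinuousLinearMap.hasFDerivAt (𝕜 := ℝ) (f := EuclideanSpace.proj (0 : Fin 2))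

lemma hx1 (x : E2) : HasFDerivAt (fun y : E2 => y 1) (Dc 0 1) x := by
  have h : Dc 0 1 = EuclideanSpace.proj (1 : Fin 2) := by ext v; simp [Dc_apply]
  rw [h]
  exact ContinuousLinearMap.hasFDerivAt (𝕜 := ℝ) (f := EuclideanSpace.proj (1 : Fin 2))

lemma hconst (c : ℝ) (x : E2) : HasFDerivAt (fun _ : E2 => c) (Dc 0 0) x := by
  have : HasFDerivAt (fun _ : E2 => c) (0 : E2 →L[ℝ] ℝ) x := hasFDerivAt_const c x
  convert this using 1
  ext v; simp [Dc_apply]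

def fE (ε : ℝ) (x : E2) : E4 := v4 ((x 0 ^ 2 - x 1 ^ 2) / 2) (x 0 * x 1) (ε * x 0) (ε * x 1)

lemma hasFDerivAt_fE (ε : ℝ) (x : E2) :
    HasFDerivAt (fE ε)
      (Lmk (Dc (x 0) (-(x 1))) (Dc (x 1) (x 0)) (Dc ε 0) (Dc 0 ε)) x := by
  apply hasFDerivAt_v4
  · have := (((hx0 x).mul (hx0 x)).sub ((hx1 x).mul (hx1 x))).const_mul (1/2 : ℝ)
    refine (this.congr_fderiv ?_).congr_of_eventuallyEq (Filter.Eventually.of_forall fun y => ?_)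
    · ext v; simp only [Dc_apply, ContinuousLinearMap.smul_apply, ContinuousLinearMap.add_apply, ContinuousLinearMap.sub_apply, ContinuousLinearMap.neg_apply, smul_eq_mul]; ring
    · simp only [Pi.mul_apply, Pi.sub_apply]; ring
  · have := (hx0 x).mul (hx1 x)
    exact this.congr_fderiv (by ext v; simp only [Dc_apply, ContinuousLinearMap.smul_apply, ContinuousLinearMap.add_apply, ContinuousLinearMap.sub_apply, ContinuousLinearMap.neg_apply, smul_eq_mul]; ring)
  · have := (hx0 x).const_mul ε
    exact this.congr_fderiv (by ext v; simp only [Dc_apply, ContinuousLinearMap.smul_apply, ContinuousLinearMap.add_apply, ContinuousLinearMap.sub_apply, ContinuousLinearMap.neg_apply, smul_eq_mul]; ring)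
  · have := (hx1 x).const_mul ε
    exact this.congr_fderiv (by ext v; simp only [Dc_apply, ContinuousLinearMap.smul_apply, ContinuousLinearMap.add_apply, ContinuousLinearMap.sub_apply, ContinuousLinearMap.neg_apply, smul_eq_mul]; ring)


lemma fEps_eq (ε : ℝ) : fEps ε = fE ε := rfl

lemma pd_fE0 (ε : ℝ) (x : E2) : pd (fE ε) 0 x = v4 (x 0) (x 1) ε 0 := by
  rw [pd, (hasFDerivAt_fE ε x).fderiv, Lmk_apply, Dc_single0, Dc_single0, Dc_single0, Dc_single0]

lemma pd_fE1 (ε : ℝ) (x : E2) : pd (fE ε) 1 x = v4 (-(x 1)) (x 0) 0 ε := by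
  rw [pd, (hasFDerivAt_fE ε x).fderiv, Lmk_apply, Dc_single1, Dc_single1, Dc_single1, Dc_single1]

lemma hasFDerivAt_G0 (ε : ℝ) (x : E2) :
    HasFDerivAt (fun y : E2 => v4 (y 0) (y 1) ε 0)
      (Lmk (Dc 1 0) (Dc 0 1) (Dc 0 0) (Dc 0 0)) x :=
  hasFDerivAt_v4 (hx0 x) (hx1 x) (hconst ε x) (hconst 0 x)

lemma hasFDerivAt_G1 (ε : ℝ) (x : E2) :
    HasFDerivAt (fun y : E2 => v4 (-(y 1)) (y 0) 0 ε)
      (Lmk (Dc 0 (-1)) (Dc 1 0) (Dc 0 0) (Dc 0 0)) x := by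
  refine hasFDerivAt_v4 ?_ (hx0 x) (hconst 0 x) (hconst ε x)
  have := (hx1 x).neg
  exact this.congr_fderiv (by ext v; simp only [Dc_apply, ContinuousLinearMap.smul_apply, ContinuousLinearMap.add_apply, ContinuousLinearMap.sub_apply, ContinuousLinearMap.neg_apply, smul_eq_mul]; ring)

lemma pd2_fE00 (ε : ℝ) (x : E2) : pd2 (fE ε) 0 0 x = v4 1 0 0 0 := by
  rw [pd2, show pd (fE ε) 0 = (fun y : E2 => v4 (y 0) (y 1) ε 0) from funext (pd_fE0 ε),
    pd, (hasFDerivAt_G0 ε x).fderiv, Lmk_apply, Dc_single0, Dc_single0, Dc_single0]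

lemma pd2_fE10 (ε : ℝ) (x : E2) : pd2 (fE ε) 1 0 x = v4 0 1 0 0 := by
  rw [pd2, show pd (fE ε) 0 = (fun y : E2 => v4 (y 0) (y 1) ε 0) from funext (pd_fE0 ε),
    pd, (hasFDerivAt_G0 ε x).fderiv, Lmk_apply, Dc_single1, Dc_single1, Dc_single1]

lemma pd2_fE01 (ε : ℝ) (x : E2) : pd2 (fE ε) 0 1 x = v4 0 1 0 0 := by
  rw [pd2, show pd (fE ε) 1 = (fun y : E2 => v4 (-(y 1)) (y 0) 0 ε) from funext (pd_fE1 ε),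
    pd, (hasFDerivAt_G1 ε x).fderiv, Lmk_apply, Dc_single0, Dc_single0, Dc_single0]

lemma pd2_fE11 (ε : ℝ) (x : E2) : pd2 (fE ε) 1 1 x = v4 (-1) 0 0 0 := by
  rw [pd2, show pd (fE ε) 1 = (fun y : E2 => v4 (-(y 1)) (y 0) 0 ε) from funext (pd_fE1 ε),
    pd, (hasFDerivAt_G1 ε x).fderiv, Lmk_apply, Dc_single1, Dc_single1, Dc_single1]

lemma inner_v4 (a b c d a' b' c' d' : ℝ) :
    (inner ℝ (v4 a b c d) (v4 a' b' c' d') : ℝ) = a * a' + b * b' + c * c' + d * d' := by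
  simp [v4, PiLp.inner_apply, Fin.sum_univ_four, RCLike.inner_apply]
  ring

lemma norm_v4_sq (a b c d : ℝ) : ‖v4 a b c d‖ ^ 2 = a ^ 2 + b ^ 2 + c ^ 2 + d ^ 2 := by
  rw [EuclideanSpace.norm_eq, Real.sq_sqrt (by positivity)]
  simp [Fin.sum_univ_four, v4_apply]

lemma v4_comb (t s1 s2 a b c d a1 b1 c1 d1 a2 b2 c2 d2 : ℝ) :
    v4 a b c d - t • (s1 • v4 a1 b1 c1 d1 + s2 • v4 a2 b2 c2 d2) =
      v4 (a - t * (s1 * a1 + s2 * a2)) (b - t * (s1 * b1 + s2 * b2))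
        (c - t * (s1 * c1 + s2 * c2)) (d - t * (s1 * d1 + s2 * d2)) := by
  ext k
  fin_cases k <;> simp [v4] <;> ring


lemma sff00 (ε : ℝ) (hε : 0 < ε) (x : E2) :
    sff (fEps ε) (uEps ε) 0 0 x =
      v4 (ε^2/(x 0^2 + x 1^2 + ε^2)) 0 (-(ε * x 0)/(x 0^2 + x 1^2 + ε^2))
        (ε * x 1/(x 0^2 + x 1^2 + ε^2)) := by
  have hr : (0:ℝ) < x 0^2 + x 1^2 + ε^2 := by positivity
  have em2u : Real.exp (-(2 * uEps ε x)) = (x 0^2 + x 1^2 + ε^2)⁻¹ := by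
    rw [show -(2 * uEps ε x) = -Real.log (x 0^2 + x 1^2 + ε^2) by rw [uEps]; ring,
      Real.exp_neg, Real.exp_log hr]
  rw [sff, fEps_eq, pd2_fE00, pd_fE0, pd_fE1, em2u, inner_v4, inner_v4, v4_comb]
  congr 1 <;> field_simp <;> ring

lemma sff01 (ε : ℝ) (hε : 0 < ε) (x : E2) :
    sff (fEps ε) (uEps ε) 0 1 x =
      v4 0 (ε^2/(x 0^2 + x 1^2 + ε^2)) (-(ε * x 1)/(x 0^2 + x 1^2 + ε^2))
        (-(ε * x 0)/(x 0^2 + x 1^2 + ε^2)) := by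
  have hr : (0:ℝ) < x 0^2 + x 1^2 + ε^2 := by positivity
  have em2u : Real.exp (-(2 * uEps ε x)) = (x 0^2 + x 1^2 + ε^2)⁻¹ := by
    rw [show -(2 * uEps ε x) = -Real.log (x 0^2 + x 1^2 + ε^2) by rw [uEps]; ring,
      Real.exp_neg, Real.exp_log hr]
  rw [sff, fEps_eq, pd2_fE01, pd_fE0, pd_fE1, em2u, inner_v4, inner_v4, v4_comb]
  congr 1 <;> field_simp <;> ring

lemma sff10 (ε : ℝ) (hε : 0 < ε) (x : E2) :
    sff (fEps ε) (uEps ε) 1 0 x =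
      v4 0 (ε^2/(x 0^2 + x 1^2 + ε^2)) (-(ε * x 1)/(x 0^2 + x 1^2 + ε^2))
        (-(ε * x 0)/(x 0^2 + x 1^2 + ε^2)) := by
  have hr : (0:ℝ) < x 0^2 + x 1^2 + ε^2 := by positivity
  have em2u : Real.exp (-(2 * uEps ε x)) = (x 0^2 + x 1^2 + ε^2)⁻¹ := by
    rw [show -(2 * uEps ε x) = -Real.log (x 0^2 + x 1^2 + ε^2) by rw [uEps]; ring,
      Real.exp_neg, Real.exp_log hr]
  rw [sff, fEps_eq, pd2_fE10, pd_fE0, pd_fE1, em2u, inner_v4, inner_v4, v4_comb]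
  congr 1 <;> field_simp <;> ring

lemma sff11 (ε : ℝ) (hε : 0 < ε) (x : E2) :
    sff (fEps ε) (uEps ε) 1 1 x =
      v4 (-(ε^2)/(x 0^2 + x 1^2 + ε^2)) 0 (ε * x 0/(x 0^2 + x 1^2 + ε^2))
        (-(ε * x 1)/(x 0^2 + x 1^2 + ε^2)) := by
  have hr : (0:ℝ) < x 0^2 + x 1^2 + ε^2 := by positivity
  have em2u : Real.exp (-(2 * uEps ε x)) = (x 0^2 + x 1^2 + ε^2)⁻¹ := by
    rw [show -(2 * uEps ε x) = -Real.log (x 0^2 + x 1^2 + ε^2) by rw [uEps]; ring,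
      Real.exp_neg, Real.exp_log hr]
  rw [sff, fEps_eq, pd2_fE11, pd_fE0, pd_fE1, em2u, inner_v4, inner_v4, v4_comb]
  congr 1 <;> field_simp <;> ring

lemma keyPt (ε : ℝ) (hε : 0 < ε) (x : E2) :
    normASq (fEps ε) (uEps ε) x * Real.exp (2 * uEps ε x)
      = 4 * ε^2 / (x 0^2 + x 1^2 + ε^2)^2 := by
  have hr : (0:ℝ) < x 0^2 + x 1^2 + ε^2 := by positivity
  have e2u : Real.exp (2 * uEps ε x) = x 0^2 + x 1^2 + ε^2 := by
    rw [show 2 * uEps ε x = Real.log (x 0^2 + x 1^2 + ε^2) by rw [uEps]; ring,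
      Real.exp_log hr]
  have em4u : Real.exp (-(4 * uEps ε x)) = ((x 0^2 + x 1^2 + ε^2)^2)⁻¹ := by
    rw [show -(4 * uEps ε x) = -(2 * uEps ε x) + -(2 * uEps ε x) by ring,
      Real.exp_add, Real.exp_neg, e2u, ← mul_inv, ← sq]
  rw [normASq, Fin.sum_univ_two, Fin.sum_univ_two, Fin.sum_univ_two,
    sff00 ε hε x, sff01 ε hε x, sff10 ε hε x, sff11 ε hε x]
  simp only [norm_v4_sq]
  rw [em4u, e2u]
  field_simp
  ring

/-- The total curvature of `f_ε` over the unit disk: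
`∫_D |A|²_{g_ε} dμ_{g_ε} = 4π/(1 + ε²) < 4π`. -/
theorem stmt17 (ε : ℝ) (hε : 0 < ε) :
    (∫ x in Metric.ball (0 : EuclideanSpace ℝ (Fin 2)) 1,
        normASq (fEps ε) (uEps ε) x * Real.exp (2 * uEps ε x)) = 4 * π / (1 + ε ^ 2) ∧
    4 * π / (1 + ε ^ 2) < 4 * π := by
  have hden : (0:ℝ) < 1 + ε ^ 2 := by positivity
  constructor
  · have hkey : ∀ x : E2, normASq (fEps ε) (uEps ε) x * Real.exp (2 * uEps ε x)
        = (fun t : ℝ => 4 * ε ^ 2 / (t ^ 2 + ε ^ 2) ^ 2) ‖x‖ := by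
      intro x
      have hn : ‖x‖ ^ 2 = x 0 ^ 2 + x 1 ^ 2 := by
        rw [EuclideanSpace.norm_eq, Real.sq_sqrt (by positivity)]
        simp [Fin.sum_univ_two]
      rw [keyPt ε hε x]
      simp only
      rw [hn]
    set g : ℝ → ℝ := fun t => 4 * ε ^ 2 / (t ^ 2 + ε ^ 2) ^ 2 with hg
    have hvol : (volume (Metric.ball (0 : E2) 1)).toReal = π := by
      rw [EuclideanSpace.volume_ball]
      have hG : Real.Gamma ((Fintype.card (Fin 2) : ℝ) / 2 + 1) = 1 := by
        rw [show ((Fintype.card (Fin 2) : ℝ) / 2 + 1) = (1 : ℕ) + 1 by norm_num,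
          Real.Gamma_nat_eq_factorial]
        simp
      rw [hG]
      simp [Real.sq_sqrt Real.pi_nonneg, ENNReal.toReal_ofReal Real.pi_nonneg]
    have hftc : ∫ y in (0:ℝ)..1, y * g y
        = (fun t : ℝ => -(2 * ε ^ 2) * (t ^ 2 + ε ^ 2)⁻¹) 1
          - (fun t : ℝ => -(2 * ε ^ 2) * (t ^ 2 + ε ^ 2)⁻¹) 0 := by
      have hd : ∀ t ∈ Set.uIcc (0:ℝ) 1,
          HasDerivAt (fun t : ℝ => -(2 * ε ^ 2) * (t ^ 2 + ε ^ 2)⁻¹) (t * g t) t := by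
        intro t _
        have h1 : HasDerivAt (fun t : ℝ => t ^ 2 + ε ^ 2) (2 * t) t := by
          simpa using (hasDerivAt_pow 2 t).add_const (ε ^ 2)
        have h2 := (h1.inv (by positivity)).const_mul (-(2 * ε ^ 2))
        refine h2.congr_deriv ?_
        simp only [hg]
        ring
      have hgc : Continuous g := by
        apply continuous_const.div (by continuity)
        intro t; positivity
      exact intervalIntegral.integral_eq_sub_of_hasDerivAt hd
        ((continuous_id.mul hgc).intervalIntegrable 0 1)
    have hrad := MeasureTheory.integral_fun_norm_addHaar (volume : Measure E2)
      (Set.indicator (Set.Iio (1:ℝ)) g)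
    calc (∫ x in Metric.ball (0:E2) 1, normASq (fEps ε) (uEps ε) x * Real.exp (2 * uEps ε x))
        = ∫ x in Metric.ball (0:E2) 1, g ‖x‖ := by simp only [hkey]
      _ = ∫ x : E2, Set.indicator (Metric.ball 0 1) (fun x => g ‖x‖) x :=
          (MeasureTheory.integral_indicator measurableSet_ball).symm
      _ = ∫ x : E2, (Set.indicator (Set.Iio 1) g) ‖x‖ := by
          congr 1
          funext x
          by_cases h : ‖x‖ < 1 <;>
            simp [Set.indicator_apply, mem_ball_zero_iff, h]
      _ = (Module.finrank ℝ E2) • (volume (Metric.ball (0:E2) 1)).toReal •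
            ∫ y in Set.Ioi (0:ℝ), y ^ (Module.finrank ℝ E2 - 1) • (Set.indicator (Set.Iio 1) g) y :=
          hrad
      _ = 2 * (π * ∫ y in Set.Ioi (0:ℝ), y * (Set.indicator (Set.Iio 1) g) y) := by
          rw [hvol]
          simp [finrank_euclideanSpace, smul_eq_mul]
      _ = 2 * (π * ∫ y in Set.Ioi (0:ℝ), (Set.indicator (Set.Iio 1) (fun y => y * g y)) y) := by
          congr 2
          apply MeasureTheory.integral_congr_ae
          filter_upwards with y
          by_cases h : y ∈ Set.Iio (1:ℝ) <;> simp [Set.indicator_apply, h]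
      _ = 2 * (π * ∫ y in Set.Ioi (0:ℝ) ∩ Set.Iio 1, y * g y) := by
          rw [MeasureTheory.setIntegral_indicator measurableSet_Iio]
      _ = 2 * (π * ∫ y in (0:ℝ)..1, y * g y) := by
          rw [Set.Ioi_inter_Iio, intervalIntegral.integral_of_le zero_le_one,
            MeasureTheory.integral_Ioc_eq_integral_Ioo]
      _ = 4 * π / (1 + ε ^ 2) := by
          rw [hftc]
          simp only
          field_simp
          ring
  · exact div_lt_self (by positivity) (by nlinarith)
end
end

section
/- Let f : ℂ → ℝ³ be the Enneper immersion f(z) = ½ Re(z − z³/3, i(z + z³/3), z²), and for λ > 0 let f_λ : D → ℝ³, f_λ(z) = λ^{−3} f(λ z). Then f_λ is a smooth conformal immersion with ⟨∂_i f_λ, ∂_j f_λ⟩ = ((1 + λ²|z|²)/(2λ²))² δ_{ij}, and its second fundamental form satisfies ∫_D |A|²_{g_λ} dμ_{g_λ} = 8πλ²/(1 + λ²); in particular this quantity is strictly less than 8π for every λ > 0. -/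
open MeasureTheory Real Filter Topology

noncomputable section

/-- The Enneper immersion `f(z) = ½ Re(z − z³/3, i(z + z³/3), z²)`, written in real
coordinates `z = x₀ + i x₁`. -/
def enneper (x : EuclideanSpace ℝ (Fin 2)) : EuclideanSpace ℝ (Fin 3) :=
  (WithLp.equiv 2 (Fin 3 → ℝ)).symm
    ![((x 0 + x 1 * Complex.I) - (x 0 + x 1 * Complex.I) ^ 3 / 3).re / 2,
      (Complex.I * ((x 0 + x 1 * Complex.I) + (x 0 + x 1 * Complex.I) ^ 3 / 3)).re / 2,
      (((x 0 + x 1 * Complex.I)) ^ 2).re / 2]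

/-- The rescaled Enneper immersion `f_λ(z) = λ^{−3} f(λ z)`. -/
def fLam (l : ℝ) (x : EuclideanSpace ℝ (Fin 2)) : EuclideanSpace ℝ (Fin 3) :=
  (l ^ 3)⁻¹ • enneper (l • x)

/-- The conformal factor `u_λ(z) = log((1 + λ²|z|²)/(2λ²))` of `f_λ`. -/
def uLam (l : ℝ) (x : EuclideanSpace ℝ (Fin 2)) : ℝ :=
  Real.log ((1 + l ^ 2 * (x 0 ^ 2 + x 1 ^ 2)) / (2 * l ^ 2))


section Aux
open Set
local notation "E2" => EuclideanSpace ℝ (Fin 2)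
local notation "E3" => EuclideanSpace ℝ (Fin 3)


def v3 (a b c : ℝ) : E3 := (WithLp.equiv 2 (Fin 3 → ℝ)).symm ![a,b,c]
@[simp] lemma v3_app0 (a b c : ℝ) : v3 a b c 0 = a := rfl
@[simp] lemma v3_app1 (a b c : ℝ) : v3 a b c 1 = b := rfl
@[simp] lemma v3_app2 (a b c : ℝ) : v3 a b c 2 = c := rfl

def pr (i : Fin 2) : E2 →L[ℝ] ℝ := EuclideanSpace.proj i
lemma hxp (i : Fin 2) (x : E2) : HasFDerivAt (fun y : E2 => y i) (pr i) x :=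
  (pr i).hasFDerivAt
@[simp] lemma pr_single (i j : Fin 2) :
    pr i (EuclideanSpace.single j (1:ℝ)) = if i = j then 1 else 0 := by
  simp [pr, EuclideanSpace.single_apply, eq_comm]

lemma hcongr {E : Type*} [NormedAddCommGroup E] [NormedSpace ℝ E]
    {f g : E2 → E} {L L' : E2 →L[ℝ] E} {x : E2} (h : HasFDerivAt f L x)
    (hfg : ∀ y, g y = f y) (hL : ∀ v, L' v = L v) : HasFDerivAt g L' x := by
  have : L' = L := ContinuousLinearMap.ext hL
  subst this
  exact h.congr_of_eventuallyEq (by filter_upwards with y using hfg y)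

def mk3 (L₀ L₁ L₂ : E2 →L[ℝ] ℝ) : E2 →L[ℝ] E3 :=
  L₀.smulRight (v3 1 0 0) + L₁.smulRight (v3 0 1 0) + L₂.smulRight (v3 0 0 1)

lemma mk3_apply (L₀ L₁ L₂ : E2 →L[ℝ] ℝ) (v : E2) :
    mk3 L₀ L₁ L₂ v = v3 (L₀ v) (L₁ v) (L₂ v) := by
  ext i; fin_cases i <;> simp [mk3, v3]

lemma hasFD_v3 {f₀ f₁ f₂ : E2 → ℝ} {L₀ L₁ L₂ : E2 →L[ℝ] ℝ} {x : E2}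
    (h₀ : HasFDerivAt f₀ L₀ x) (h₁ : HasFDerivAt f₁ L₁ x) (h₂ : HasFDerivAt f₂ L₂ x) :
    HasFDerivAt (fun y => v3 (f₀ y) (f₁ y) (f₂ y)) (mk3 L₀ L₁ L₂) x := by
  refine hcongr (((h₀.smul_const (v3 1 0 0)).add (h₁.smul_const (v3 0 1 0))).add
    (h₂.smul_const (v3 0 0 1))) (fun y => ?_) (fun v => ?_)
  · ext i; fin_cases i <;> simp [v3]
  · simp [mk3]

lemma fLam_eq (l : ℝ) (hl : l ≠ 0) (y : E2) :
    fLam l y = v3 ((l⁻¹^2 * y 0 - (y 0)^3/3 + y 0 * (y 1)^2)/2)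
      ((-l⁻¹^2 * y 1 - (y 0)^2 * y 1 + (y 1)^3/3)/2)
      (l⁻¹ * ((y 0)^2 - (y 1)^2)/2) := by
  have hs : ∀ i : Fin 2, (l • y) i = l * y i := fun i => rfl
  ext i
  fin_cases i <;>
    simp [fLam, enneper, v3, hs, Complex.add_re, Complex.mul_re, Complex.mul_im,
      Complex.div_re, Complex.normSq, pow_succ, PiLp.smul_apply, smul_eq_mul] <;>
    field_simp <;> ring

def T1 (l : ℝ) (x : E2) : E3 := v3 ((l⁻¹^2 - (x 0)^2 + (x 1)^2)/2) (-(x 0 * x 1)) (l⁻¹ * x 0)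
def T2 (l : ℝ) (x : E2) : E3 := v3 (x 0 * x 1) ((-l⁻¹^2 - (x 0)^2 + (x 1)^2)/2) (-(l⁻¹ * x 1))
def S11 (l : ℝ) (x : E2) : E3 := v3 (-(x 0)) (-(x 1)) l⁻¹
def S12 (x : E2) : E3 := v3 (x 1) (-(x 0)) 0
def S22 (l : ℝ) (x : E2) : E3 := v3 (x 0) (x 1) (-l⁻¹)


lemma hasFD_fLam (l : ℝ) (hl : l ≠ 0) (x : E2) :
    HasFDerivAt (fLam l)
      (mk3 (((l⁻¹^2 - (x 0)^2 + (x 1)^2)/2) • pr 0 + (x 0 * x 1) • pr 1)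
           ((-(x 0 * x 1)) • pr 0 + ((-l⁻¹^2 - (x 0)^2 + (x 1)^2)/2) • pr 1)
           ((l⁻¹ * x 0) • pr 0 + (-(l⁻¹ * x 1)) • pr 1)) x := by
  have h0 := hxp 0 x
  have h1 := hxp 1 x
  have ha : HasFDerivAt (fun y : E2 => (l⁻¹^2 * y 0 - (y 0)^3/3 + y 0 * (y 1)^2)/2)
      ((((l⁻¹^2 - (x 0)^2 + (x 1)^2)/2) • pr 0 + (x 0 * x 1) • pr 1 : E2 →L[ℝ] ℝ)) x :=
    hcongr ((((h0.const_mul (l⁻¹^2)).sub (((h0.mul h0).mul h0).const_mul 3⁻¹)).add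
        (h0.mul (h1.mul h1))).const_mul (1/2))
      (fun y => by simp only [Pi.mul_apply, Pi.pow_apply, Pi.sub_apply, Pi.add_apply]; ring) (fun v => by simp; ring)
  have hb : HasFDerivAt (fun y : E2 => (-l⁻¹^2 * y 1 - (y 0)^2 * y 1 + (y 1)^3/3)/2)
      (((-(x 0 * x 1)) • pr 0 + ((-l⁻¹^2 - (x 0)^2 + (x 1)^2)/2) • pr 1 : E2 →L[ℝ] ℝ)) x :=
    hcongr ((((h1.const_mul (-l⁻¹^2)).sub ((h0.mul (h0.mul h1)))).add
        (((h1.mul h1).mul h1).const_mul 3⁻¹)).const_mul (1/2))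
      (fun y => by simp only [Pi.mul_apply, Pi.pow_apply, Pi.sub_apply, Pi.add_apply]; ring) (fun v => by simp; ring)
  have hc : HasFDerivAt (fun y : E2 => l⁻¹ * ((y 0)^2 - (y 1)^2)/2)
      (((l⁻¹ * x 0) • pr 0 + (-(l⁻¹ * x 1)) • pr 1 : E2 →L[ℝ] ℝ)) x :=
    hcongr ((((h0.mul h0).sub (h1.mul h1)).const_mul l⁻¹).const_mul (1/2))
      (fun y => by simp only [Pi.mul_apply, Pi.pow_apply, Pi.sub_apply, Pi.add_apply]; ring) (fun v => by simp; ring)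
  exact hcongr (hasFD_v3 ha hb hc) (fun y => fLam_eq l hl y) (fun v => rfl)

lemma pd_fLam0 (l : ℝ) (hl : l ≠ 0) (x : E2) : pd (fLam l) 0 x = T1 l x := by
  rw [pd, (hasFD_fLam l hl x).fderiv, mk3_apply]
  simp [T1]

lemma pd_fLam1 (l : ℝ) (hl : l ≠ 0) (x : E2) : pd (fLam l) 1 x = T2 l x := by
  rw [pd, (hasFD_fLam l hl x).fderiv, mk3_apply]
  simp [T2]

lemma hasFD_T1 (l : ℝ) (x : E2) :
    HasFDerivAt (T1 l)
      (mk3 ((-(x 0)) • pr 0 + (x 1) • pr 1)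
           ((-(x 1)) • pr 0 + (-(x 0)) • pr 1)
           (l⁻¹ • pr 0 + (0:ℝ) • pr 1)) x := by
  have h0 := hxp 0 x
  have h1 := hxp 1 x
  have ha : HasFDerivAt (fun y : E2 => (l⁻¹^2 - (y 0)^2 + (y 1)^2)/2)
      (((-(x 0)) • pr 0 + (x 1) • pr 1 : E2 →L[ℝ] ℝ)) x :=
    hcongr ((((h1.mul h1).sub (h0.mul h0)).add_const (l⁻¹^2)).const_mul (1/2))
      (fun y => by simp only [Pi.mul_apply, Pi.pow_apply, Pi.sub_apply, Pi.add_apply]; ring) (fun v => by simp; ring)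
  have hb : HasFDerivAt (fun y : E2 => -(y 0 * y 1))
      (((-(x 1)) • pr 0 + (-(x 0)) • pr 1 : E2 →L[ℝ] ℝ)) x :=
    hcongr ((h0.mul h1).const_mul (-1)) (fun y => by simp only [Pi.mul_apply, Pi.pow_apply, Pi.sub_apply, Pi.add_apply]; ring) (fun v => by simp; ring)
  have hc : HasFDerivAt (fun y : E2 => l⁻¹ * y 0)
      ((l⁻¹ • pr 0 + (0:ℝ) • pr 1 : E2 →L[ℝ] ℝ)) x :=
    hcongr (h0.const_mul l⁻¹) (fun y => by ring) (fun v => by simp)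
  exact hasFD_v3 ha hb hc

lemma hasFD_T2 (l : ℝ) (x : E2) :
    HasFDerivAt (T2 l)
      (mk3 ((x 1) • pr 0 + (x 0) • pr 1)
           ((-(x 0)) • pr 0 + (x 1) • pr 1)
           ((0:ℝ) • pr 0 + (-l⁻¹) • pr 1)) x := by
  have h0 := hxp 0 x
  have h1 := hxp 1 x
  have ha : HasFDerivAt (fun y : E2 => y 0 * y 1)
      (((x 1) • pr 0 + (x 0) • pr 1 : E2 →L[ℝ] ℝ)) x :=
    hcongr (h0.mul h1) (fun y => by simp only [Pi.mul_apply, Pi.pow_apply, Pi.sub_apply, Pi.add_apply]) (fun v => by simp; ring)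
  have hb : HasFDerivAt (fun y : E2 => (-l⁻¹^2 - (y 0)^2 + (y 1)^2)/2)
      (((-(x 0)) • pr 0 + (x 1) • pr 1 : E2 →L[ℝ] ℝ)) x :=
    hcongr ((((h1.mul h1).sub (h0.mul h0)).add_const (-l⁻¹^2)).const_mul (1/2))
      (fun y => by simp only [Pi.mul_apply, Pi.pow_apply, Pi.sub_apply, Pi.add_apply]; ring) (fun v => by simp; ring)
  have hc : HasFDerivAt (fun y : E2 => -(l⁻¹ * y 1))
      (((0:ℝ) • pr 0 + (-l⁻¹) • pr 1 : E2 →L[ℝ] ℝ)) x :=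
    hcongr (h1.const_mul (-l⁻¹)) (fun y => by ring) (fun v => by simp)
  exact hasFD_v3 ha hb hc

lemma pdT1_0 (l : ℝ) (x : E2) : pd (T1 l) 0 x = S11 l x := by
  rw [pd, (hasFD_T1 l x).fderiv, mk3_apply]; simp [S11]

lemma pdT1_1 (l : ℝ) (x : E2) : pd (T1 l) 1 x = S12 x := by
  rw [pd, (hasFD_T1 l x).fderiv, mk3_apply]; simp [S12]

lemma pdT2_0 (l : ℝ) (x : E2) : pd (T2 l) 0 x = S12 x := by
  rw [pd, (hasFD_T2 l x).fderiv, mk3_apply]; simp [S12]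

lemma pdT2_1 (l : ℝ) (x : E2) : pd (T2 l) 1 x = S22 l x := by
  rw [pd, (hasFD_T2 l x).fderiv, mk3_apply]; simp [S22]

lemma inner_v3 (a b c d e f : ℝ) : (inner ℝ (v3 a b c) (v3 d e f) : ℝ) = a*d + b*e + c*f := by
  simp [PiLp.inner_apply, Fin.sum_univ_three]; ring

lemma norm_sq_v3 (a b c : ℝ) : ‖v3 a b c‖^2 = a^2+b^2+c^2 := by
  rw [← real_inner_self_eq_norm_sq, inner_v3]; ring

def Qf (l : ℝ) (x : E2) : ℝ := (1 + l ^ 2 * (x 0 ^ 2 + x 1 ^ 2)) / (2 * l ^ 2)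

lemma Qf_pos (l : ℝ) (hl : l ≠ 0) (x : E2) : 0 < Qf l x := by
  have : (0:ℝ) < l ^ 2 := by positivity
  have h1 : (0:ℝ) < 1 + l ^ 2 * (x 0 ^ 2 + x 1 ^ 2) := by positivity
  exact div_pos h1 (by positivity)

lemma exp_uLam (l : ℝ) (hl : l ≠ 0) (x : E2) : Real.exp (uLam l x) = Qf l x :=
  Real.exp_log (Qf_pos l hl x)

lemma exp2_uLam (l : ℝ) (hl : l ≠ 0) (x : E2) : Real.exp (2 * uLam l x) = (Qf l x)^2 := by
  rw [show (2:ℝ) * uLam l x = uLam l x + uLam l x by ring, Real.exp_add, exp_uLam l hl]; ring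

lemma expneg2_uLam (l : ℝ) (hl : l ≠ 0) (x : E2) :
    Real.exp (-(2 * uLam l x)) = ((Qf l x)^2)⁻¹ := by
  rw [Real.exp_neg, exp2_uLam l hl]

lemma expneg4_uLam (l : ℝ) (hl : l ≠ 0) (x : E2) :
    Real.exp (-(4 * uLam l x)) = ((Qf l x)^4)⁻¹ := by
  rw [show -(4 * uLam l x) = -(2 * uLam l x) + -(2 * uLam l x) by ring, Real.exp_add,
    expneg2_uLam l hl]
  rw [← mul_inv]; ring_nf

lemma pd2_00 (l : ℝ) (hl : l ≠ 0) (x : E2) : pd2 (fLam l) 0 0 x = S11 l x := by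
  rw [pd2, funext (pd_fLam0 l hl), pdT1_0]

lemma pd2_01 (l : ℝ) (hl : l ≠ 0) (x : E2) : pd2 (fLam l) 0 1 x = S12 x := by
  rw [pd2, funext (pd_fLam1 l hl), pdT2_0]

lemma pd2_10 (l : ℝ) (hl : l ≠ 0) (x : E2) : pd2 (fLam l) 1 0 x = S12 x := by
  rw [pd2, funext (pd_fLam0 l hl), pdT1_1]

lemma pd2_11 (l : ℝ) (hl : l ≠ 0) (x : E2) : pd2 (fLam l) 1 1 x = S22 l x := by
  rw [pd2, funext (pd_fLam1 l hl), pdT2_1]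


lemma conf (l : ℝ) (hl : l ≠ 0) (x : E2) (i j : Fin 2) :
    (inner ℝ (pd (fLam l) i x) (pd (fLam l) j x) : ℝ) =
      ((1 + l ^ 2 * (x 0 ^ 2 + x 1 ^ 2)) / (2 * l ^ 2)) ^ 2 * (if i = j then 1 else 0) := by
  have hi : i = 0 ∨ i = 1 := by omega
  have hj : j = 0 ∨ j = 1 := by omega
  rcases hi with rfl | rfl <;> rcases hj with rfl | rfl <;>
    simp only [pd_fLam0 l hl, pd_fLam1 l hl, T1, T2, inner_v3] <;>
    norm_num <;> field_simp <;> ring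


lemma smul_v3 (t a b c : ℝ) : t • v3 a b c = v3 (t*a) (t*b) (t*c) := by
  ext i; fin_cases i <;> simp [v3]

lemma add_v3 (a b c d e f : ℝ) : v3 a b c + v3 d e f = v3 (a+d) (b+e) (c+f) := by
  ext i; fin_cases i <;> simp [v3]

lemma sub_v3 (a b c d e f : ℝ) : v3 a b c - v3 d e f = v3 (a-d) (b-e) (c-f) := by
  ext i; fin_cases i <;> simp [v3]

lemma v3_congr {a b c d e f : ℝ} (h1 : a = d) (h2 : b = e) (h3 : c = f) :
    v3 a b c = v3 d e f := by rw [h1, h2, h3]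

lemma v3_zero : v3 0 0 0 = 0 := by
  ext i; fin_cases i <;> simp [v3]

lemma sff00_s18 (l : ℝ) (hl : l ≠ 0) (x : E2) :
    sff (fLam l) (uLam l) 0 0 x =
      v3 (-(x 0) * l⁻¹^2 / Qf l x) (-(x 1) * l⁻¹^2 / Qf l x)
         (l⁻¹ * (l⁻¹^2 - ((x 0)^2 + (x 1)^2)) / (2 * Qf l x)) := by
  have hQ := (Qf_pos l hl x).ne'
  rw [show Qf l x = (1 + l ^ 2 * (x 0 ^ 2 + x 1 ^ 2)) / (2 * l ^ 2) from rfl] at hQ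
  simp only [sff, pd2_00 l hl, pd_fLam0 l hl, pd_fLam1 l hl, expneg2_uLam l hl,
    S11, T1, T2, inner_v3, smul_v3, add_v3, sub_v3, Qf]
  exact v3_congr (by field_simp; ring) (by field_simp; ring) (by field_simp; ring)

lemma sff11_s18 (l : ℝ) (hl : l ≠ 0) (x : E2) :
    sff (fLam l) (uLam l) 1 1 x =
      v3 (x 0 * l⁻¹^2 / Qf l x) (x 1 * l⁻¹^2 / Qf l x)
         (-(l⁻¹ * (l⁻¹^2 - ((x 0)^2 + (x 1)^2))) / (2 * Qf l x)) := by
  have hQ := (Qf_pos l hl x).ne'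
  rw [show Qf l x = (1 + l ^ 2 * (x 0 ^ 2 + x 1 ^ 2)) / (2 * l ^ 2) from rfl] at hQ
  simp only [sff, pd2_11 l hl, pd_fLam0 l hl, pd_fLam1 l hl, expneg2_uLam l hl,
    S22, T1, T2, inner_v3, smul_v3, add_v3, sub_v3, Qf]
  exact v3_congr (by field_simp; ring) (by field_simp; ring) (by field_simp; ring)

lemma sff01_s18 (l : ℝ) (hl : l ≠ 0) (x : E2) : sff (fLam l) (uLam l) 0 1 x = 0 := by
  have hQ := (Qf_pos l hl x).ne'
  rw [show Qf l x = (1 + l ^ 2 * (x 0 ^ 2 + x 1 ^ 2)) / (2 * l ^ 2) from rfl] at hQ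
  simp only [sff, pd2_01 l hl, pd_fLam0 l hl, pd_fLam1 l hl, expneg2_uLam l hl,
    S12, T1, T2, inner_v3, smul_v3, add_v3, sub_v3, Qf]
  rw [← v3_zero]
  exact v3_congr (by field_simp; ring) (by field_simp; ring) (by field_simp; ring)

lemma sff10_s18 (l : ℝ) (hl : l ≠ 0) (x : E2) : sff (fLam l) (uLam l) 1 0 x = 0 := by
  have hQ := (Qf_pos l hl x).ne'
  rw [show Qf l x = (1 + l ^ 2 * (x 0 ^ 2 + x 1 ^ 2)) / (2 * l ^ 2) from rfl] at hQ
  simp only [sff, pd2_10 l hl, pd_fLam0 l hl, pd_fLam1 l hl, expneg2_uLam l hl,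
    S12, T1, T2, inner_v3, smul_v3, add_v3, sub_v3, Qf]
  rw [← v3_zero]
  exact v3_congr (by field_simp; ring) (by field_simp; ring) (by field_simp; ring)

lemma key_integrand (l : ℝ) (hl : l ≠ 0) (x : E2) :
    normASq (fLam l) (uLam l) x * Real.exp (2 * uLam l x) =
      8 * l ^ 2 / (1 + l ^ 2 * ((x 0)^2 + (x 1)^2)) ^ 2 := by
  have hQ := (Qf_pos l hl x).ne'
  have h1 : (0:ℝ) < 1 + l ^ 2 * (x 0 ^ 2 + x 1 ^ 2) := by positivity
  simp only [normASq, Fin.sum_univ_two, sff00_s18 l hl, sff01_s18 l hl, sff10_s18 l hl, sff11_s18 l hl,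
    expneg4_uLam l hl, exp2_uLam l hl, norm_sq_v3, norm_zero]
  rw [show Qf l x = (1 + l ^ 2 * (x 0 ^ 2 + x 1 ^ 2)) / (2 * l ^ 2) from rfl] at hQ ⊢
  field_simp
  ring

lemma h0cd : ContDiff ℝ (⊤:ℕ∞) (fun x : E2 => x 0) :=
  (EuclideanSpace.proj (0:Fin 2) : E2 →L[ℝ] ℝ).contDiff
lemma h1cd : ContDiff ℝ (⊤:ℕ∞) (fun x : E2 => x 1) :=
  (EuclideanSpace.proj (1:Fin 2) : E2 →L[ℝ] ℝ).contDiff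

lemma contDiff_uLam (l : ℝ) (hl : l ≠ 0) : ContDiff ℝ (⊤:ℕ∞) (uLam l) := by
  have hc : ContDiff ℝ (⊤:ℕ∞) (fun x : E2 => (1 + l ^ 2 * (x 0 ^ 2 + x 1 ^ 2)) / (2 * l ^ 2)) :=
    (contDiff_const.add (contDiff_const.mul ((h0cd.pow 2).add (h1cd.pow 2)))).div_const (2*l^2)
  refine hc.log fun x => ?_
  have : (0:ℝ) < l^2 := by positivity
  positivity

lemma contDiff_v3comp {f₀ f₁ f₂ : E2 → ℝ} (h₀ : ContDiff ℝ (⊤:ℕ∞) f₀)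
    (h₁ : ContDiff ℝ (⊤:ℕ∞) f₁) (h₂ : ContDiff ℝ (⊤:ℕ∞) f₂) :
    ContDiff ℝ (⊤:ℕ∞) (fun y => v3 (f₀ y) (f₁ y) (f₂ y)) := by
  have e : ∀ y, v3 (f₀ y) (f₁ y) (f₂ y)
      = f₀ y • v3 1 0 0 + f₁ y • v3 0 1 0 + f₂ y • v3 0 0 1 := by
    intro y; ext i; fin_cases i <;> simp [v3]
  have : ContDiff ℝ (⊤:ℕ∞) (fun y => f₀ y • v3 1 0 0 + f₁ y • v3 0 1 0 + f₂ y • v3 0 0 1) :=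
    ((h₀.smul contDiff_const).add (h₁.smul contDiff_const)).add (h₂.smul contDiff_const)
  rwa [show (fun y => v3 (f₀ y) (f₁ y) (f₂ y)) = fun y => f₀ y • v3 1 0 0 + f₁ y • v3 0 1 0 + f₂ y • v3 0 0 1 from funext e]


lemma norm_sq_E2 (x : E2) : ‖x‖^2 = (x 0)^2 + (x 1)^2 := by
  rw [EuclideanSpace.norm_eq, Real.sq_sqrt (by positivity)]
  simp [Fin.sum_univ_two, sq_abs]

lemma ftc (l : ℝ) (hl : 0 < l) :
    ∫ r in (0:ℝ)..1, r * (8*l^2/(1+l^2*r^2)^2) = 4*l^2/(1+l^2) := by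
  have hD : ∀ r : ℝ, (0:ℝ) < 1 + l^2*r^2 := fun r => by positivity
  have hd : ∀ r ∈ Set.uIcc (0:ℝ) 1,
      HasDerivAt (fun r : ℝ => -4*(1+l^2*r^2)⁻¹) (r * (8*l^2/(1+l^2*r^2)^2)) r := by
    intro r _
    have h1 : HasDerivAt (fun r : ℝ => 1+l^2*r^2) (2*l^2*r) r := by
      have := ((hasDerivAt_pow 2 r).const_mul (l^2)).const_add 1
      refine this.congr_deriv ?_
      push_cast; ring
    have h2 := (h1.inv (hD r).ne').const_mul (-4)
    refine h2.congr_deriv ?_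
    field_simp
    ring
  have hcont : Continuous (fun r : ℝ => r * (8*l^2/(1+l^2*r^2)^2)) := by
    refine continuous_id.mul (continuous_const.div ?_ fun r => by positivity)
    exact ((continuous_const.add (continuous_const.mul (continuous_pow 2))).pow 2)
  rw [intervalIntegral.integral_eq_sub_of_hasDerivAt hd (hcont.intervalIntegrable 0 1)]
  have : (0:ℝ) < 1 + l^2 := by positivity
  field_simp
  ring

lemma integral_ball_radial (l : ℝ) (hl : 0 < l) :
    ∫ x in Metric.ball (0:E2) 1, 8*l^2/(1+l^2*((x 0)^2+(x 1)^2))^2 = 8*π*l^2/(1+l^2) := by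
  have hl' : l ≠ 0 := hl.ne'
  set g : ℝ → ℝ := fun r => 8*l^2/(1+l^2*r^2)^2 with hg
  have step1 : ∫ x in Metric.ball (0:E2) 1, 8*l^2/(1+l^2*((x 0)^2+(x 1)^2))^2
      = ∫ x in Metric.ball (0:E2) 1, g ‖x‖ := by
    refine setIntegral_congr_fun measurableSet_ball fun x _ => ?_
    rw [hg]; simp only []; rw [norm_sq_E2]
  have step2 : ∫ x in Metric.ball (0:E2) 1, g ‖x‖
      = ∫ x : E2, (Set.Iio (1:ℝ)).indicator g ‖x‖ := by
    rw [← integral_indicator measurableSet_ball]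
    congr 1
    funext x
    by_cases hx : ‖x‖ < 1 <;>
      simp [Set.indicator, mem_ball_zero_iff, hx]
  have step3 := integral_fun_norm_addHaar (volume : Measure E2) ((Set.Iio (1:ℝ)).indicator g)
  rw [step1, step2, step3]
  have hdim : Module.finrank ℝ E2 = 2 := finrank_euclideanSpace_fin
  rw [hdim]
  have hvol : volume.real (Metric.ball (0:E2) 1) = π := by
    rw [measureReal_def, EuclideanSpace.volume_ball]
    norm_num [Real.Gamma_two, Real.sq_sqrt Real.pi_nonneg, ENNReal.toReal_ofReal Real.pi_nonneg]
  rw [hvol]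
  have step4 : ∫ y in Set.Ioi (0:ℝ), y ^ (2-1) • (Set.Iio (1:ℝ)).indicator g y
      = ∫ r in (0:ℝ)..1, r * g r := by
    have : (fun y : ℝ => y ^ (2-1) • (Set.Iio (1:ℝ)).indicator g y)
        = fun y => (Set.Iio (1:ℝ)).indicator (fun r => r * g r) y := by
      funext y
      by_cases hy : y < 1 <;> simp [Set.indicator, hy]
    rw [this, setIntegral_indicator measurableSet_Iio, Set.Ioi_inter_Iio,
      ← integral_Ioc_eq_integral_Ioo, ← intervalIntegral.integral_of_le zero_le_one]
  rw [step4, ftc l hl]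
  rw [nsmul_eq_mul, smul_eq_mul]
  have : (0:ℝ) < 1 + l^2 := by positivity
  field_simp
  ring


theorem stmt18' (l : ℝ) (hl : 0 < l) :
    (∀ x : EuclideanSpace ℝ (Fin 2), ∀ i j : Fin 2,
      (inner ℝ (pd (fLam l) i x) (pd (fLam l) j x) : ℝ) =
        ((1 + l ^ 2 * (x 0 ^ 2 + x 1 ^ 2)) / (2 * l ^ 2)) ^ 2 * (if i = j then 1 else 0)) ∧
    IsConfImm Set.univ (fLam l) (uLam l) ∧
    (∫ x in Metric.ball (0 : EuclideanSpace ℝ (Fin 2)) 1,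
        normASq (fLam l) (uLam l) x * Real.exp (2 * uLam l x))
      = 8 * π * l ^ 2 / (1 + l ^ 2) ∧
    8 * π * l ^ 2 / (1 + l ^ 2) < 8 * π := by
  have hl' : l ≠ 0 := hl.ne'
  refine ⟨fun x i j => conf l hl' x i j, ⟨?_, ?_, ?_⟩, ?_, ?_⟩
  · -- smoothness of fLam
    refine ContDiff.contDiffOn ?_
    rw [show fLam l = (fun y : E2 => v3 ((l⁻¹^2 * y 0 - (y 0)^3/3 + y 0 * (y 1)^2)/2)
        ((-l⁻¹^2 * y 1 - (y 0)^2 * y 1 + (y 1)^3/3)/2)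
        (l⁻¹ * ((y 0)^2 - (y 1)^2)/2)) from funext (fLam_eq l hl')]
    exact contDiff_v3comp
      ((((contDiff_const.mul h0cd).sub ((h0cd.pow 3).div_const 3)).add
        (h0cd.mul (h1cd.pow 2))).div_const 2)
      ((((contDiff_const.mul h1cd).sub ((h0cd.pow 2).mul h1cd)).add
        ((h1cd.pow 3).div_const 3)).div_const 2)
      ((contDiff_const.mul ((h0cd.pow 2).sub (h1cd.pow 2))).div_const 2)
  · exact (contDiff_uLam l hl').contDiffOn
  · intro x _ i j
    rw [conf l hl' x i j, exp2_uLam l hl']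
    rfl
  · have h1 := setIntegral_congr_fun (μ := volume) (s := Metric.ball (0:E2) 1) measurableSet_ball
      (fun x _ => key_integrand l hl' x)
    rw [h1, integral_ball_radial l hl]
  · have hπ := Real.pi_pos
    rw [div_lt_iff₀ (by positivity)]
    nlinarith [Real.pi_pos, sq_nonneg l]

end Aux

/-- `f_λ` is conformal with factor `(1 + λ²|z|²)/(2λ²)` and its total curvature over the unit
disk equals `8πλ²/(1 + λ²) < 8π`. -/
theorem stmt18 (l : ℝ) (hl : 0 < l) :
    (∀ x : EuclideanSpace ℝ (Fin 2), ∀ i j : Fin 2,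
      (inner ℝ (pd (fLam l) i x) (pd (fLam l) j x) : ℝ) =
        ((1 + l ^ 2 * (x 0 ^ 2 + x 1 ^ 2)) / (2 * l ^ 2)) ^ 2 * (if i = j then 1 else 0)) ∧
    IsConfImm Set.univ (fLam l) (uLam l) ∧
    (∫ x in Metric.ball (0 : EuclideanSpace ℝ (Fin 2)) 1,
        normASq (fLam l) (uLam l) x * Real.exp (2 * uLam l x))
      = 8 * π * l ^ 2 / (1 + l ^ 2) ∧
    8 * π * l ^ 2 / (1 + l ^ 2) < 8 * π := by
  exact stmt18' l hl
end
end
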